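/- arXiv:2002.04282 — 6 statements merged into one kernel-verified Lean document; each statement's English description precedes it below -/
import Mathlib

section
/- For every set X ⊆ ℝ^n and every point x ∈ ℝ^n, the set Str_X(x) of X-strata at x is an ℝ-linear subspace of ℝ^n (it contains 0 and is closed under addition and scalar multiplication). -/
open FirstOrder

/-- The language of `⟨ℝ,+,<,1⟩`: one constant, one binary function, one binary relation. -/
def SsLang : Language where
  Functions := fun m => match m with
    | 0 => Unit
    | 2 => Unit
    | _ => Empty
  Relations := fun m => match m with
    | 2 => Unit
    | _ => Empty

noncomputable instance ssStructure : SsLang.Structure ℝ where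
  funMap := fun {m} f x =>
    match m, f with
    | 0, _ => (1 : ℝ)
    | 2, _ => x 0 + x 1
  RelMap := fun {m} r x =>
    match m, r with
    | 2, _ => x 0 < x 1

/-- The language of `⟨ℝ,+,<,ℤ⟩`: one binary function, one unary relation, one binary relation. -/
def LsLang : Language where
  Functions := fun m => match m with
    | 2 => Unit
    | _ => Empty
  Relations := fun m => match m with
    | 1 => Unit
    | 2 => Unit
    | _ => Empty

noncomputable instance lsStructure : LsLang.Structure ℝ where
  funMap := fun {m} f x =>
    match m, f with
    | 2, _ => x 0 + x 1
  RelMap := fun {m} r x =>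
    match m, r with
    | 1, _ => ∃ k : ℤ, x 0 = (k : ℝ)
    | 2, _ => x 0 < x 1

/-- `X ⊆ ℝ^n` is definable without parameters in `⟨ℝ,+,<,1⟩`. -/
def SsDefinable {n : ℕ} (X : Set (Fin n → ℝ)) : Prop :=
  Set.Definable (∅ : Set ℝ) SsLang X

/-- `X ⊆ ℝ^n` is definable without parameters in `⟨ℝ,+,<,ℤ⟩`. -/
def LsDefinable {n : ℕ} (X : Set (Fin n → ℝ)) : Prop :=
  Set.Definable (∅ : Set ℝ) LsLang X

def SsDefinable1 (A : Set ℝ) : Prop := SsDefinable {f : Fin 1 → ℝ | f 0 ∈ A}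
def LsDefinable1 (A : Set ℝ) : Prop := LsDefinable {f : Fin 1 → ℝ | f 0 ∈ A}

/-- `v` is an `X`-stratum at `x`: for some `r > 0`,
`B(x,r) ∩ L_v(X ∩ B(x,r)) ⊆ X`.  (The sup norm/metric is the default one on `ι → ℝ`.) -/
def IsStratum {ι : Type} [Fintype ι] (X : Set (ι → ℝ)) (x v : ι → ℝ) : Prop :=
  ∃ r > (0 : ℝ), ∀ y ∈ Metric.ball x r,
    (∃ z ∈ X ∩ Metric.ball x r, ∃ α : ℝ, y = z + α • v) → y ∈ X

/-- `x` is `X`-singular: `Str_X(x) = {0}`. -/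
def IsSingular {ι : Type} [Fintype ι] (X : Set (ι → ℝ)) (x : ι → ℝ) : Prop :=
  ∀ v, IsStratum X x v → v = 0

/-- `x ∼_X y`: some translation of a small ball around `x` identifies `X` near `x` and near `y`. -/
def SimX {n : ℕ} (X : Set (Fin n → ℝ)) (x y : Fin n → ℝ) : Prop :=
  ∃ r > (0 : ℝ), ∀ w : Fin n → ℝ, ‖w‖ < r → (x + w ∈ X ↔ y + w ∈ X)

/-- the dimension of the subspace `Str_X(x)` of strata at `x`. -/
noncomputable def strDim {n : ℕ} (X : Set (Fin n → ℝ)) (x : Fin n → ℝ) : ℕ :=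
  Module.finrank ℝ (Submodule.span ℝ {v | IsStratum X x v})

/-- An interval of `ℝ` all of whose finite endpoints are rational: an order-convex set
whose frontier points (i.e. finite endpoints) are all rational. -/
def IsRatInterval (I : Set ℝ) : Prop :=
  I.OrdConnected ∧ ∀ x ∈ frontier I, ∃ q : ℚ, x = (q : ℝ)

/-- `Str_X(x)` is an `ℝ`-linear subspace of `ℝ^n`: it contains `0` and is closed under
addition and scalar multiplication. -/
theorem stmt4 (n : ℕ) (X : Set (Fin n → ℝ)) (x : Fin n → ℝ) :
    IsStratum X x 0 ∧
    (∀ v w : Fin n → ℝ, IsStratum X x v → IsStratum X x w → IsStratum X x (v + w)) ∧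
    (∀ (c : ℝ) (v : Fin n → ℝ), IsStratum X x v → IsStratum X x (c • v)) := by
  have hzero : IsStratum X x 0 := by
    refine ⟨1, one_pos, ?_⟩
    rintro y _ ⟨z, ⟨hzX, _⟩, α, rfl⟩
    simpa using hzX
  have hsmul : ∀ (c : ℝ) (v : Fin n → ℝ), IsStratum X x v → IsStratum X x (c • v) := by
    rintro c v ⟨r, hr, H⟩
    refine ⟨r, hr, ?_⟩
    rintro y hy ⟨z, hz, α, rfl⟩
    exact H _ hy ⟨z, hz, α * c, by rw [smul_smul]⟩
  refine ⟨hzero, ?_, hsmul⟩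
  rintro v w ⟨rv, hrv, Hv⟩ ⟨rw', hrw, Hw⟩
  set m := min rv rw' with hm
  have hm0 : 0 < m := lt_min hrv hrw
  have hmrv : m ≤ rv := min_le_left _ _
  have hmrw : m ≤ rw' := min_le_right _ _
  refine ⟨m / 2, by positivity, ?_⟩
  rintro y hy ⟨z, ⟨hzX, hzb⟩, α, rfl⟩
  obtain ⟨N, hNgt⟩ := exists_nat_gt ((|α| * ‖v‖ + |α| * ‖w‖) / (m / 4))
  have hq0 : 0 ≤ (|α| * ‖v‖ + |α| * ‖w‖) / (m / 4) := by positivity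
  have hN0 : 0 < (N : ℝ) := lt_of_le_of_lt hq0 hNgt
  have hsum : |α| * ‖v‖ + |α| * ‖w‖ < (N : ℝ) * (m / 4) := by
    rw [div_lt_iff₀ (by positivity : (0:ℝ) < m / 4)] at hNgt
    linarith
  set β : ℝ := α / N with hβ
  have hβv : ‖β • v‖ < m / 4 := by
    rw [norm_smul, Real.norm_eq_abs, hβ, abs_div, abs_of_pos hN0, div_mul_eq_mul_div,
      div_lt_iff₀ hN0]
    nlinarith [abs_nonneg α, norm_nonneg w, norm_nonneg v]
  have hβw : ‖β • w‖ < m / 4 := by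
    rw [norm_smul, Real.norm_eq_abs, hβ, abs_div, abs_of_pos hN0, div_mul_eq_mul_div,
      div_lt_iff₀ hN0]
    nlinarith [abs_nonneg α, norm_nonneg w, norm_nonneg v]
  set p : ℕ → (Fin n → ℝ) := fun k => z + ((k : ℝ) * β) • (v + w) with hp
  have hzn : ‖z - x‖ < m / 2 := by
    rw [← dist_eq_norm]; exact Metric.mem_ball.mp hzb
  have hyn : ‖z + α • (v + w) - x‖ < m / 2 := by
    rw [← dist_eq_norm]; exact Metric.mem_ball.mp hy
  have hball : ∀ k ≤ N, ‖p k - x‖ < m / 2 := by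
    intro k hk
    set t : ℝ := (k : ℝ) / N with ht
    have ht0 : 0 ≤ t := by positivity
    have ht1 : t ≤ 1 := by
      rw [ht, div_le_one hN0]
      exact_mod_cast hk
    have key : p k - x = (1 - t) • (z - x) + t • (z + α • (v + w) - x) := by
      have hts : (k : ℝ) * β = t * α := by
        rw [ht, hβ]; ring
      rw [hp]
      simp only
      rw [hts]
      module
    have hb : ‖p k - x‖ ≤ (1 - t) * ‖z - x‖ + t * ‖z + α • (v + w) - x‖ := by
      rw [key]
      refine (norm_add_le _ _).trans ?_
      rw [norm_smul, norm_smul, Real.norm_eq_abs, Real.norm_eq_abs,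
        abs_of_nonneg (by linarith : (0:ℝ) ≤ 1 - t), abs_of_nonneg ht0]
    have hmax : (1 - t) * ‖z - x‖ + t * ‖z + α • (v + w) - x‖
        ≤ max ‖z - x‖ ‖z + α • (v + w) - x‖ := by
      nlinarith [mul_nonneg (by linarith : (0:ℝ) ≤ 1 - t)
          (sub_nonneg.mpr (le_max_left ‖z - x‖ ‖z + α • (v + w) - x‖)),
        mul_nonneg ht0
          (sub_nonneg.mpr (le_max_right ‖z - x‖ ‖z + α • (v + w) - x‖))]
    exact lt_of_le_of_lt (hb.trans hmax) (max_lt hzn hyn)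
  have hX : ∀ k ≤ N, p k ∈ X := by
    intro k
    induction k with
    | zero => intro _; simpa [hp] using hzX
    | succ k ih =>
      intro hk
      have hk' : k ≤ N := Nat.le_of_succ_le hk
      have hpk : p k ∈ X := ih hk'
      have hpkb : ‖p k - x‖ < m / 2 := hball k hk'
      have hqb : ‖p k + β • v - x‖ < 3 * m / 4 := by
        have : p k + β • v - x = (p k - x) + β • v := by abel
        rw [this]
        calc ‖(p k - x) + β • v‖ ≤ ‖p k - x‖ + ‖β • v‖ := norm_add_le _ _
          _ < 3 * m / 4 := by linarith
      have hqX : p k + β • v ∈ X := by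
        refine Hv _ ?_ ⟨p k, ⟨hpk, ?_⟩, β, rfl⟩
        · rw [Metric.mem_ball, dist_eq_norm]; linarith
        · rw [Metric.mem_ball, dist_eq_norm]; linarith
      have hstep : p (k + 1) = (p k + β • v) + β • w := by
        rw [hp]
        simp only
        push_cast
        module
      rw [hstep]
      refine Hw _ ?_ ⟨p k + β • v, ⟨hqX, ?_⟩, β, rfl⟩
      · rw [Metric.mem_ball, dist_eq_norm, ← hstep]
        have := hball (k + 1) hk
        linarith
      · rw [Metric.mem_ball, dist_eq_norm]; linarith
  have hfin : z + α • (v + w) = p N := by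
    rw [hp]
    simp only
    rw [hβ, mul_div_cancel₀ _ (ne_of_gt hN0)]
  rw [hfin]
  exact hX N le_rfl
end

section
/- For every set X ⊆ ℝ^n and every point x ∈ ℝ^n there exists a real r > 0 such that, for every v ∈ Str_X(x), B(x,r) ∩ L_v(X ∩ B(x,r)) ⊆ X (i.e., a single radius r witnesses the stratum condition simultaneously for all strata at x). -/
open FirstOrder

section Aux

/-- The stratum condition for `v` at `x` with a specified radius `s`. -/
def StrP {n : ℕ} (X : Set (Fin n → ℝ)) (x : Fin n → ℝ) (v : Fin n → ℝ) (s : ℝ) : Prop :=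
  ∀ y ∈ Metric.ball x s, (∃ z ∈ X ∩ Metric.ball x s, ∃ α : ℝ, y = z + α • v) → y ∈ X

theorem StrP.mono {n : ℕ} {X : Set (Fin n → ℝ)} {x v : Fin n → ℝ} {s s' : ℝ}
    (h : StrP X x v s) (hs : s' ≤ s) : StrP X x v s' := by
  intro y hy ⟨z, ⟨hzX, hz⟩, α, hα⟩
  exact h y (Metric.ball_subset_ball hs hy) ⟨z, ⟨hzX, Metric.ball_subset_ball hs hz⟩, α, hα⟩

theorem StrP.smul {n : ℕ} {X : Set (Fin n → ℝ)} {x v : Fin n → ℝ} {s : ℝ}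
    (h : StrP X x v s) (c : ℝ) : StrP X x (c • v) s := by
  intro y hy ⟨z, hz, α, hα⟩
  exact h y hy ⟨z, hz, α * c, by rw [hα, smul_smul]⟩

theorem StrP.zero {n : ℕ} {X : Set (Fin n → ℝ)} {x : Fin n → ℝ} {s : ℝ} :
    StrP X x 0 s := by
  intro y hy ⟨z, ⟨hzX, _⟩, α, hα⟩
  simpa [hα] using hzX

theorem StrP.add {n : ℕ} {X : Set (Fin n → ℝ)} {x v w : Fin n → ℝ} {s : ℝ} (hs : 0 < s)
    (hv : StrP X x v s) (hw : StrP X x w s) : StrP X x (v + w) (s / 2) := by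
  intro y hy ⟨z, ⟨hzX, hz⟩, α, hα⟩
  rw [Metric.mem_ball] at hy hz
  set d : ℝ := max (dist y x) (dist z x) with hd
  have hds : d < s / 2 := max_lt hy hz
  have hds' : d < s := hds.trans (by linarith)
  -- every point on the segment from z to y is within d of x
  have hseg : ∀ t : ℝ, 0 ≤ t → t ≤ 1 → dist (z + t • (y - z)) x ≤ d := by
    intro t ht0 ht1
    have : z + t • (y - z) - x = (1 - t) • (z - x) + t • (y - x) := by
      module
    rw [dist_eq_norm, this]
    calc ‖(1 - t) • (z - x) + t • (y - x)‖
        ≤ ‖(1 - t) • (z - x)‖ + ‖t • (y - x)‖ := norm_add_le _ _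
      _ = (1 - t) * ‖z - x‖ + t * ‖y - x‖ := by
          rw [norm_smul, norm_smul, Real.norm_of_nonneg (by linarith),
            Real.norm_of_nonneg ht0]
      _ ≤ (1 - t) * d + t * d := by
          have h1 : ‖z - x‖ ≤ d := by rw [← dist_eq_norm]; exact le_max_right _ _
          have h2 : ‖y - x‖ ≤ d := by rw [← dist_eq_norm]; exact le_max_left _ _
          have ht1' : (0:ℝ) ≤ 1 - t := by linarith
          nlinarith
      _ = d := by ring
  -- choose N large
  have hsd : (0:ℝ) < s - d := by linarith
  obtain ⟨N, hN⟩ := exists_nat_gt (|α| * ‖v‖ / (s - d))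
  have hNpos : (0:ℝ) < N := lt_of_le_of_lt (by positivity) hN
  have hN0 : (N:ℝ) ≠ 0 := ne_of_gt hNpos
  have hstep : |α| * ‖v‖ / N < s - d := by
    rw [div_lt_iff₀ hNpos]
    have h := (div_lt_iff₀ hsd).mp hN
    linarith [mul_comm (s - d) (N:ℝ)]
  -- the chain of points
  set p : ℕ → (Fin n → ℝ) := fun i => z + ((i : ℝ) / N) • (α • (v + w)) with hp
  have hpseg : ∀ i : ℕ, i ≤ N → dist (p i) x ≤ d := by
    intro i hi
    have h1 : (0:ℝ) ≤ (i : ℝ) / N := by positivity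
    have h2 : (i : ℝ) / N ≤ 1 := by
      rw [div_le_one hNpos]; exact_mod_cast hi
    have hyz : y - z = α • (v + w) := by rw [hα]; abel
    have hpi : p i = z + ((i : ℝ) / N) • (y - z) := by rw [hyz]
    rw [hpi]
    exact hseg _ h1 h2
  have hchain : ∀ i : ℕ, i ≤ N → p i ∈ X := by
    intro i hi
    induction i with
    | zero => simpa [hp] using hzX
    | succ i ih =>
      have hi' : i ≤ N := Nat.le_of_succ_le hi
      have hpiX : p i ∈ X := ih hi'
      have hpiball : p i ∈ Metric.ball x s :=
        Metric.mem_ball.mpr (lt_of_le_of_lt (hpseg i hi') hds')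
      -- intermediate point q
      set q : Fin n → ℝ := p i + (α / N) • v with hq
      have hqdist : dist q x < s := by
        calc dist q x ≤ dist q (p i) + dist (p i) x := dist_triangle _ _ _
          _ = ‖(α / N) • v‖ + dist (p i) x := by
              have hqp : q - p i = (α / ↑N) • v := by rw [hq]; abel
              rw [dist_eq_norm, hqp]
          _ ≤ |α| * ‖v‖ / N + d := by
              have h1 := hpseg i hi'
              have h2 : ‖(α / ↑N) • v‖ = |α| * ‖v‖ / ↑N := by
                rw [norm_smul, Real.norm_eq_abs, abs_div, Nat.abs_cast]
                ring
              rw [h2]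
              linarith
          _ < s := by linarith
      have hqX : q ∈ X :=
        hv q (Metric.mem_ball.mpr hqdist) ⟨p i, ⟨hpiX, hpiball⟩, α / N, rfl⟩
      have hpsucc : p (i + 1) = q + (α / N) • w := by
        rw [hq, hp]
        simp only [Nat.cast_succ]
        have hcoef : ((i : ℝ) + 1) / N = (i : ℝ) / N + 1 / N := by ring
        rw [hcoef, add_smul, smul_smul, smul_smul]
        have : (1 / (N:ℝ) * α) • (v + w) = (α / N) • v + (α / N) • w := by
          rw [smul_add]; congr 1 <;> (congr 1; field_simp)
        rw [this]; abel
      have hpball : p (i + 1) ∈ Metric.ball x s :=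
        Metric.mem_ball.mpr (lt_of_le_of_lt (hpseg _ hi) hds')
      rw [hpsucc] at hpball ⊢
      exact hw _ hpball ⟨q, ⟨hqX, Metric.mem_ball.mpr hqdist⟩, α / N, rfl⟩
  have : p N = y := by
    rw [hp, hα]
    simp [div_self hN0]
  rw [← this]
  exact hchain N le_rfl

end Aux

theorem StrP.span_radius {n : ℕ} {X : Set (Fin n → ℝ)} {x : Fin n → ℝ} {s : ℝ} (hs : 0 < s) :
    ∀ T : Finset (Fin n → ℝ), (∀ w ∈ T, StrP X x w s) →
      ∀ v ∈ Submodule.span ℝ (T : Set (Fin n → ℝ)), StrP X x v (s / 2 ^ T.card) := by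
  classical
  intro T
  induction T using Finset.induction_on with
  | empty =>
    intro _ v hv
    rw [Finset.coe_empty, Submodule.span_empty, Submodule.mem_bot] at hv
    subst hv
    simpa using (StrP.zero : StrP X x 0 s)
  | @insert a T ha ih =>
    intro hT v hv
    rw [Finset.coe_insert, Submodule.mem_span_insert] at hv
    obtain ⟨c, u, hu, rfl⟩ := hv
    have hpos : (0:ℝ) < s / 2 ^ T.card := by positivity
    have h1 : StrP X x u (s / 2 ^ T.card) :=
      ih (fun w hw => hT w (Finset.mem_insert_of_mem hw)) u hu
    have h2 : StrP X x (c • a) (s / 2 ^ T.card) :=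
      StrP.mono (StrP.smul (hT a (Finset.mem_insert_self a T)) c)
        (div_le_self hs.le (one_le_pow₀ one_le_two))
    have h3 : StrP X x (c • a + u) (s / 2 ^ T.card / 2) := StrP.add hpos h2 h1
    have hcard : (insert a T).card = T.card + 1 := Finset.card_insert_of_notMem ha
    have : s / 2 ^ T.card / 2 = s / 2 ^ (insert a T).card := by
      rw [hcard, pow_succ, div_div]
    rwa [this] at h3

theorem exists_common_radius {n : ℕ} {X : Set (Fin n → ℝ)} {x : Fin n → ℝ} :
    ∀ T : Finset (Fin n → ℝ), (∀ w ∈ T, IsStratum X x w) →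
      ∃ s > (0:ℝ), ∀ w ∈ T, StrP X x w s := by
  classical
  intro T
  induction T using Finset.induction_on with
  | empty => exact fun _ => ⟨1, one_pos, by simp⟩
  | @insert a T ha ih =>
    intro hT
    obtain ⟨s, hs, hsT⟩ := ih (fun w hw => hT w (Finset.mem_insert_of_mem hw))
    obtain ⟨t, ht, hta⟩ := hT a (Finset.mem_insert_self a T)
    refine ⟨min s t, lt_min hs ht, ?_⟩
    intro w hw
    rcases Finset.mem_insert.mp hw with rfl | hw
    · exact StrP.mono hta (min_le_right _ _)
    · exact (hsT w hw).mono (min_le_left _ _)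


/-- A single radius witnesses the stratum condition simultaneously for all strata at `x`. -/
theorem stmt5 (n : ℕ) (X : Set (Fin n → ℝ)) (x : Fin n → ℝ) :
    ∃ r > (0 : ℝ), ∀ v : Fin n → ℝ, IsStratum X x v →
      ∀ y ∈ Metric.ball x r,
        (∃ z ∈ X ∩ Metric.ball x r, ∃ α : ℝ, y = z + α • v) → y ∈ X := by
  classical
  set Str : Set (Fin n → ℝ) := {v | IsStratum X x v} with hStrdef
  have hfg : (Submodule.span ℝ Str).FG :=
    (Submodule.fg_iff_finiteDimensional _).mpr inferInstance
  obtain ⟨G, hG⟩ := hfg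
  have hmem : ∀ g ∈ G, g ∈ Submodule.span ℝ Str := by
    intro g hg
    rw [← hG]
    exact Submodule.subset_span hg
  choose f hf1 hf2 using fun (g : Fin n → ℝ) (hg : g ∈ G) =>
    Submodule.mem_span_finite_of_mem_span (hmem g hg)
  set T : Finset (Fin n → ℝ) := G.attach.biUnion (fun g => f g.1 g.2) with hTdef
  have hTStr : ∀ w ∈ T, IsStratum X x w := by
    intro w hw
    simp only [hTdef, Finset.mem_biUnion, Finset.mem_attach, true_and] at hw
    obtain ⟨g, hg⟩ := hw
    exact hf1 g.1 g.2 hg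
  have hspan : Submodule.span ℝ Str ≤ Submodule.span ℝ (T : Set (Fin n → ℝ)) := by
    rw [← hG]
    apply Submodule.span_le.mpr
    intro g hg
    refine Submodule.span_mono ?_ (hf2 g hg)
    intro w hw
    simp only [hTdef, Finset.coe_biUnion, Finset.mem_coe, Set.mem_iUnion]
    exact ⟨⟨g, hg⟩, Finset.mem_attach _ _, hw⟩
  obtain ⟨s, hs, hsT⟩ := exists_common_radius T hTStr
  refine ⟨s / 2 ^ T.card, by positivity, ?_⟩
  intro v hv
  exact StrP.span_radius hs T hsT v (hspan (Submodule.subset_span hv))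
end

section
/- Let X ⊆ ℝ^n, let x ∈ ℝ^n, and let r > 0 be a safe radius for x with respect to X. Then for every y ∈ B(x,r) one has Str_X(x) ⊆ Str_X(y). -/
open FirstOrder

/-- If `r` is a safe radius for `x` then `Str_X(x) ⊆ Str_X(y)` for every `y ∈ B(x,r)`. -/
theorem stmt7 (n : ℕ) (X : Set (Fin n → ℝ)) (x : Fin n → ℝ) (r : ℝ) (hr : 0 < r)
    (hsafe : ∀ v : Fin n → ℝ, IsStratum X x v →
      ∀ y ∈ Metric.ball x r,
        (∃ z ∈ X ∩ Metric.ball x r, ∃ α : ℝ, y = z + α • v) → y ∈ X)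
    (y : Fin n → ℝ) (hy : y ∈ Metric.ball x r) :
    ∀ v : Fin n → ℝ, IsStratum X x v → IsStratum X y v := by
  intro v hv
  refine ⟨r - dist y x, by simpa [Metric.mem_ball] using hy, ?_⟩
  intro w hw ⟨z, ⟨hzX, hzb⟩, α, hwz⟩
  have hsub : Metric.ball y (r - dist y x) ⊆ Metric.ball x r :=
    Metric.ball_subset_ball' (by linarith)
  exact hsafe v hv w (hsub hw) ⟨z, ⟨hzX, hsub hzb⟩, α, hwz⟩
end

section
/- Let X ⊆ ℝ^n be ⟨ℝ,+,<,ℤ⟩-definable. Then: (1) the equivalence relation ∼_X on ℝ^n has only finitely many equivalence classes; and (2) the family of subspaces {Str_X(x) : x ∈ ℝ^n} is finite. -/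
open FirstOrder

noncomputable section AuxProofDev
open Classical

/-- linear form evaluation -/
def dotv {n : ℕ} (a x : Fin n → ℝ) : ℝ := ∑ j, a j * x j

structure Constr (n : ℕ) where
  a : Fin n → ℝ
  b : ℝ
  strict : Bool

def Constr.holds {n} (c : Constr n) (x : Fin n → ℝ) : Prop :=
  if c.strict then dotv c.a x + c.b < 0 else dotv c.a x + c.b ≤ 0

def Cell {n} (cs : List (Constr n)) : Set (Fin n → ℝ) := {x | ∀ c ∈ cs, c.holds x}

def SLset {n} (P : List (List (Constr n))) : Set (Fin n → ℝ) := {x | ∃ cs ∈ P, x ∈ Cell cs}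

lemma dotv_add {n} (a x y : Fin n → ℝ) : dotv a (x + y) = dotv a x + dotv a y := by
  simp [dotv, mul_add, Finset.sum_add_distrib]

lemma dotv_neg {n} (a x : Fin n → ℝ) : dotv (-a) x = -(dotv a x) := by
  simp [dotv]

lemma dotv_sub_coeff {n} (s t : ℝ) (a b x : Fin n → ℝ) :
    dotv (fun j => s * a j - t * b j) x = s * dotv a x - t * dotv b x := by
  simp [dotv, sub_mul, mul_assoc, Finset.sum_sub_distrib, Finset.mul_sum]

def Constr.neg {n} (c : Constr n) : Constr n := ⟨-c.a, -c.b, !c.strict⟩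

lemma Constr.neg_holds {n} (c : Constr n) (x : Fin n → ℝ) :
    c.neg.holds x ↔ ¬ c.holds x := by
  cases c with
  | mk a b s =>
    cases s <;> simp [Constr.holds, Constr.neg, dotv_neg] <;> constructor <;> intro h <;> linarith

lemma cell_append {n} (p q : List (Constr n)) : Cell (p ++ q) = Cell p ∩ Cell q := by
  ext x; simp only [Cell, Set.mem_inter_iff, Set.mem_setOf_eq, List.mem_append, or_imp, forall_and]

lemma SLset_nil {n} : SLset ([] : List (List (Constr n))) = ∅ := by
  ext x; simp [SLset]

lemma SLset_cons {n} (p) (P : List (List (Constr n))) :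
    SLset (p :: P) = Cell p ∪ SLset P := by
  ext x
  simp only [SLset, Set.mem_setOf_eq, List.mem_cons, Set.mem_union]
  constructor
  · rintro ⟨cs, (rfl | h), hx⟩
    · exact Or.inl hx
    · exact Or.inr ⟨cs, h, hx⟩
  · rintro (h | ⟨cs, h, hx⟩)
    · exact ⟨p, Or.inl rfl, h⟩
    · exact ⟨cs, Or.inr h, hx⟩

lemma SLset_append {n} (P Q : List (List (Constr n))) :
    SLset (P ++ Q) = SLset P ∪ SLset Q := by
  ext x
  simp only [SLset, Set.mem_setOf_eq, List.mem_append, Set.mem_union]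
  constructor
  · rintro ⟨cs, (h | h), hx⟩
    · exact Or.inl ⟨cs, h, hx⟩
    · exact Or.inr ⟨cs, h, hx⟩
  · rintro (⟨cs, h, hx⟩ | ⟨cs, h, hx⟩)
    · exact ⟨cs, Or.inl h, hx⟩
    · exact ⟨cs, Or.inr h, hx⟩

lemma SLset_univ {n} : SLset ([ [] ] : List (List (Constr n))) = Set.univ := by
  ext x; simp [SLset, Cell]

lemma SLset_inter {n} (P Q : List (List (Constr n))) :
    ∃ R, SLset R = SLset P ∩ SLset Q := by
  refine ⟨P.flatMap (fun p => Q.map (fun q => p ++ q)), ?_⟩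
  ext x
  simp only [SLset, Set.mem_inter_iff, Set.mem_setOf_eq, List.mem_flatMap, List.mem_map]
  constructor
  · rintro ⟨cs, ⟨p, hp, q, hq, rfl⟩, hx⟩
    rw [cell_append] at hx
    exact ⟨⟨p, hp, hx.1⟩, ⟨q, hq, hx.2⟩⟩
  · rintro ⟨⟨p, hp, hxp⟩, ⟨q, hq, hxq⟩⟩
    exact ⟨p ++ q, ⟨p, hp, q, hq, rfl⟩, by rw [cell_append]; exact ⟨hxp, hxq⟩⟩

lemma cell_compl {n} (p : List (Constr n)) :
    (Cell p)ᶜ = SLset (p.map (fun c => [c.neg])) := by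
  ext x
  simp only [Set.mem_compl_iff, Cell, Set.mem_setOf_eq, SLset, List.mem_map]
  constructor
  · intro h
    push_neg at h
    obtain ⟨c, hc, hcx⟩ := h
    exact ⟨[c.neg], ⟨c, hc, rfl⟩, by simpa [Cell, Constr.neg_holds] using hcx⟩
  · rintro ⟨cs, ⟨c, hc, rfl⟩, hx⟩ hall
    have := hx c.neg (by simp)
    rw [Constr.neg_holds] at this
    exact this (hall c hc)

lemma SLset_compl {n} (P : List (List (Constr n))) :
    ∃ R, SLset R = (SLset P)ᶜ := by
  induction P with
  | nil => exact ⟨[ [] ], by rw [SLset_univ, SLset_nil, Set.compl_empty]⟩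
  | cons p P ih =>
    obtain ⟨R, hR⟩ := ih
    obtain ⟨R', hR'⟩ := SLset_inter (p.map (fun c => [c.neg])) R
    refine ⟨R', ?_⟩
    rw [hR', hR, ← cell_compl, SLset_cons, Set.compl_union]

/-- interpolation between finitely many strict/weak lower and upper bounds -/
lemma exists_between_lists (L U : List (ℝ × Bool))
    (h : ∀ l ∈ L, ∀ u ∈ U, if (l.2 || u.2) then l.1 < u.1 else l.1 ≤ u.1) :
    ∃ y : ℝ, (∀ l ∈ L, if l.2 then l.1 < y else l.1 ≤ y) ∧
      (∀ u ∈ U, if u.2 then y < u.1 else y ≤ u.1) := by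
  rcases L.eq_nil_or_concat'.imp_left id with rfl | hL
  case inl =>
    -- no lower bounds
    rcases U.eq_nil_or_concat'.imp_left id with rfl | hU
    · exact ⟨0, by simp, by simp⟩
    · have hne : ((U.map Prod.fst).toFinset).Nonempty := by
        rcases hU with ⟨us, u, rfl⟩; exact ⟨u.1, by simp⟩
      set β := ((U.map Prod.fst).toFinset).min' hne with hβ
      refine ⟨β - 1, by simp, ?_⟩
      intro u hu
      have : β ≤ u.1 := Finset.min'_le _ _ (by simp only [List.mem_toFinset, List.mem_map]; exact ⟨u, hu, rfl⟩)
      have : β - 1 < u.1 := by linarith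
      split <;> linarith
  case inr =>
    have hLne : ((L.map Prod.fst).toFinset).Nonempty := by
      rcases hL with ⟨ls, l, rfl⟩; exact ⟨l.1, by simp⟩
    set α := ((L.map Prod.fst).toFinset).max' hLne with hα
    have hαmem : α ∈ (L.map Prod.fst).toFinset := Finset.max'_mem _ _
    have hle : ∀ l ∈ L, l.1 ≤ α := fun l hl =>
      Finset.le_max' _ _ (by simp only [List.mem_toFinset, List.mem_map]; exact ⟨l, hl, rfl⟩)
    rcases U.eq_nil_or_concat'.imp_left id with rfl | hU
    · refine ⟨α + 1, ?_, by simp⟩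
      intro l hl
      have := hle l hl
      split <;> linarith
    · have hUne : ((U.map Prod.fst).toFinset).Nonempty := by
        rcases hU with ⟨us, u, rfl⟩; exact ⟨u.1, by simp⟩
      set β := ((U.map Prod.fst).toFinset).min' hUne with hβ
      have hβmem : β ∈ (U.map Prod.fst).toFinset := Finset.min'_mem _ _
      have hge : ∀ u ∈ U, β ≤ u.1 := fun u hu =>
        Finset.min'_le _ _ (by simp only [List.mem_toFinset, List.mem_map]; exact ⟨u, hu, rfl⟩)
      -- get attaining elements
      simp only [List.mem_toFinset, List.mem_map] at hαmem hβmem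
      obtain ⟨l₀, hl₀, hl₀v⟩ := hαmem
      obtain ⟨u₀, hu₀, hu₀v⟩ := hβmem
      have hαβ : α ≤ β := by
        have := h l₀ hl₀ u₀ hu₀
        split at this <;> rw [hl₀v, hu₀v] at * <;> linarith
      rcases lt_or_eq_of_le hαβ with hlt | heq
      · obtain ⟨y, hy1, hy2⟩ := exists_between hlt
        refine ⟨y, fun l hl => ?_, fun u hu => ?_⟩
        · have := hle l hl; split <;> linarith
        · have := hge u hu; split <;> linarith
      · refine ⟨α, fun l hl => ?_, fun u hu => ?_⟩
        · have hl1 := hle l hl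
          by_cases hs : l.2 = true
          · simp only [hs, if_true]
            rcases lt_or_eq_of_le hl1 with h' | h'
            · exact h'
            · exfalso
              have := h l hl u₀ hu₀
              simp [hs] at this
              rw [h', hu₀v] at this
              exact absurd this (by rw [heq]; exact lt_irrefl β)
          · simp only [Bool.not_eq_true] at hs
            simp [hs]; exact hl1
        · have hu1 := hge u hu
          by_cases hs : u.2 = true
          · simp only [hs, if_true]
            rcases lt_or_eq_of_le hu1 with h' | h'
            · exact heq ▸ h'
            · exfalso
              have := h l₀ hl₀ u hu
              simp [hs] at this
              rw [hl₀v, ← h'] at this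
              exact absurd this (by rw [heq]; exact lt_irrefl β)
          · simp only [Bool.not_eq_true] at hs
            simp [hs]; exact heq ▸ hu1

section FM
variable {n : ℕ}

def projSet (S : Set (Fin (n+1) → ℝ)) : Set (Fin n → ℝ) := {x | ∃ y : ℝ, Fin.snoc x y ∈ S}

def tC (c : Constr (n+1)) : ℝ := c.a (Fin.last n)

def restrC (c : Constr (n+1)) : Constr n := ⟨fun j => c.a j.castSucc, c.b, c.strict⟩

/-- value of the restricted affine form -/
def AC (c : Constr (n+1)) (x : Fin n → ℝ) : ℝ := dotv (fun j => c.a j.castSucc) x + c.b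

def combC (l u : Constr (n+1)) : Constr n :=
  ⟨fun j => tC u * l.a j.castSucc - tC l * u.a j.castSucc, tC u * l.b - tC l * u.b,
    l.strict || u.strict⟩

lemma dotv_snoc (a : Fin (n+1) → ℝ) (x : Fin n → ℝ) (y : ℝ) :
    dotv a (Fin.snoc x y) = dotv (fun j => a j.castSucc) x + a (Fin.last n) * y := by
  simp [dotv, Fin.sum_univ_castSucc]

lemma holds_snoc (c : Constr (n+1)) (x : Fin n → ℝ) (y : ℝ) :
    c.holds (Fin.snoc x y) ↔
      (if c.strict then AC c x + tC c * y < 0 else AC c x + tC c * y ≤ 0) := by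
  simp only [Constr.holds, AC, tC, dotv_snoc]
  split <;> constructor <;> intro h <;> linarith

/-- the bound value -/
def betaC (c : Constr (n+1)) (x : Fin n → ℝ) : ℝ := -(AC c x) / tC c

lemma holds_snoc_upper (c : Constr (n+1)) (hc : 0 < tC c) (x : Fin n → ℝ) (y : ℝ) :
    c.holds (Fin.snoc x y) ↔ (if c.strict then y < betaC c x else y ≤ betaC c x) := by
  rw [holds_snoc, betaC]
  cases hs : c.strict
  · simp only [hs, Bool.false_eq_true, if_false]
    rw [le_div_iff₀ hc]; constructor <;> intro <;> linarith
  · simp only [hs, if_true]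
    rw [lt_div_iff₀ hc]; constructor <;> intro <;> linarith

lemma holds_snoc_lower (c : Constr (n+1)) (hc : tC c < 0) (x : Fin n → ℝ) (y : ℝ) :
    c.holds (Fin.snoc x y) ↔ (if c.strict then betaC c x < y else betaC c x ≤ y) := by
  rw [holds_snoc, betaC]
  have h2 : (0:ℝ) < -tC c := by linarith
  have hne : tC c ≠ 0 := ne_of_lt hc
  have hd : -AC c x / tC c = AC c x / (-tC c) := by field_simp
  cases hs : c.strict
  · simp only [hs, Bool.false_eq_true, if_false]
    rw [hd, div_le_iff₀ h2]; constructor <;> intro <;> nlinarith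
  · simp only [hs, if_true]
    rw [hd, div_lt_iff₀ h2]; constructor <;> intro <;> nlinarith

lemma combC_holds (l u : Constr (n+1)) (hl : tC l < 0) (hu : 0 < tC u) (x : Fin n → ℝ) :
    (combC l u).holds x ↔
      (if (l.strict || u.strict) then betaC l x < betaC u x else betaC l x ≤ betaC u x) := by
  have hval : dotv (fun j => tC u * l.a j.castSucc - tC l * u.a j.castSucc) x
      + (tC u * l.b - tC l * u.b) = tC u * AC l x - tC l * AC u x := by
    rw [dotv_sub_coeff]; simp only [AC]; ring
  have hprod : tC l * tC u < 0 := mul_neg_of_neg_of_pos hl hu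
  have hbeta : betaC u x - betaC l x
      = (tC u * AC l x - tC l * AC u x) / (tC l * tC u) := by
    have hnl : tC l ≠ 0 := ne_of_lt hl
    have hnu : tC u ≠ 0 := ne_of_gt hu
    simp only [betaC]
    field_simp
    ring
  have h1 : (tC u * AC l x - tC l * AC u x < 0) ↔ betaC l x < betaC u x := by
    constructor
    · intro h
      have h' : 0 < (tC u * AC l x - tC l * AC u x) / (tC l * tC u) :=
        div_pos_of_neg_of_neg h hprod
      rw [← hbeta] at h'; linarith
    · intro h
      have h' : 0 < betaC u x - betaC l x := by linarith
      rw [hbeta] at h'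
      rcases div_pos_iff.mp h' with ⟨_, h''⟩ | ⟨h'', _⟩
      · linarith
      · exact h''
  have h2 : (tC u * AC l x - tC l * AC u x ≤ 0) ↔ betaC l x ≤ betaC u x := by
    constructor
    · intro h
      have h' : 0 ≤ (tC u * AC l x - tC l * AC u x) / (tC l * tC u) :=
        div_nonneg_iff.mpr (Or.inr ⟨h, le_of_lt hprod⟩)
      rw [← hbeta] at h'; linarith
    · intro h
      have h' : 0 ≤ betaC u x - betaC l x := by linarith
      rw [hbeta] at h'
      rcases div_nonneg_iff.mp h' with ⟨_, h''⟩ | ⟨h'', _⟩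
      · linarith
      · exact h''
  simp only [Constr.holds, combC, hval]
  split_ifs with hsif
  · exact h1
  · exact h2


def FMcell (cs : List (Constr (n+1))) : List (Constr n) :=
  (cs.filter (fun c => decide (tC c = 0))).map restrC ++
    (cs.filter (fun c => decide (tC c < 0))).flatMap
      (fun l => (cs.filter (fun c => decide (0 < tC c))).map (combC l))

lemma restrC_holds (c : Constr (n+1)) (hc : tC c = 0) (x : Fin n → ℝ) (y : ℝ) :
    c.holds (Fin.snoc x y) ↔ (restrC c).holds x := by
  rw [holds_snoc, hc]
  simp only [restrC, Constr.holds, AC, zero_mul, add_zero]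
  exact Iff.rfl

lemma FMcell_eq (cs : List (Constr (n+1))) : Cell (FMcell cs) = projSet (Cell cs) := by
  ext x
  constructor
  · intro hx
    -- construct y via interpolation
    set Ls := (cs.filter (fun c => decide (tC c < 0))) with hLs
    set Us := (cs.filter (fun c => decide (0 < tC c))) with hUs
    have hpair : ∀ l ∈ Ls.map (fun c => (betaC c x, c.strict)),
        ∀ u ∈ Us.map (fun c => (betaC c x, c.strict)),
        if (l.2 || u.2) then l.1 < u.1 else l.1 ≤ u.1 := by
      rintro l hl u hu
      simp only [List.mem_map] at hl hu
      obtain ⟨lc, hlc, rfl⟩ := hl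
      obtain ⟨uc, huc, rfl⟩ := hu
      have hcomb : (combC lc uc).holds x := by
        apply hx
        simp only [FMcell, List.mem_append, List.mem_flatMap, List.mem_map]
        exact Or.inr ⟨lc, hlc, uc, huc, rfl⟩
      have hl0 : tC lc < 0 := by
        have := (List.mem_filter.mp hlc).2; simpa using this
      have hu0 : 0 < tC uc := by
        have := (List.mem_filter.mp huc).2; simpa using this
      rw [combC_holds lc uc hl0 hu0 x] at hcomb
      exact hcomb
    obtain ⟨y, hyl, hyu⟩ := exists_between_lists _ _ hpair
    refine ⟨y, ?_⟩
    intro c hc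
    rcases lt_trichotomy (tC c) 0 with h0 | h0 | h0
    · rw [holds_snoc_lower c h0 x y]
      have := hyl (betaC c x, c.strict) (by
        simp only [List.mem_map]
        exact ⟨c, List.mem_filter.mpr ⟨hc, by simpa using h0⟩, rfl⟩)
      simpa using this
    · rw [restrC_holds c h0 x y]
      apply hx
      simp only [FMcell, List.mem_append, List.mem_map]
      exact Or.inl ⟨c, List.mem_filter.mpr ⟨hc, by simpa using h0⟩, rfl⟩
    · rw [holds_snoc_upper c h0 x y]
      have := hyu (betaC c x, c.strict) (by
        simp only [List.mem_map]
        exact ⟨c, List.mem_filter.mpr ⟨hc, by simpa using h0⟩, rfl⟩)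
      simpa using this
  · rintro ⟨y, hy⟩
    intro c hc
    simp only [FMcell, List.mem_append, List.mem_map, List.mem_flatMap] at hc
    rcases hc with ⟨c', hc', rfl⟩ | ⟨l, hl, c', hc', rfl⟩
    · have h0 : tC c' = 0 := by
        have := (List.mem_filter.mp hc').2; simpa using this
      rw [← restrC_holds c' h0 x y]
      exact hy c' (List.mem_filter.mp hc').1
    · have hl0 : tC l < 0 := by
        have := (List.mem_filter.mp hl).2; simpa using this
      have hu0 : 0 < tC c' := by
        have := (List.mem_filter.mp hc').2; simpa using this
      rw [combC_holds l c' hl0 hu0 x]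
      have h1 := hy l (List.mem_filter.mp hl).1
      have h2 := hy c' (List.mem_filter.mp hc').1
      rw [holds_snoc_lower l hl0 x y] at h1
      rw [holds_snoc_upper c' hu0 x y] at h2
      cases hsl : l.strict <;> cases hsu : c'.strict <;>
        simp_all <;> linarith

lemma SLset_proj (P : List (List (Constr (n+1)))) :
    ∃ Q : List (List (Constr n)), SLset Q = projSet (SLset P) := by
  refine ⟨P.map FMcell, ?_⟩
  ext x
  simp only [SLset, Set.mem_setOf_eq, List.mem_map, projSet]
  constructor
  · rintro ⟨cs, ⟨p, hp, rfl⟩, hx⟩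
    have : x ∈ projSet (Cell p) := by rw [← FMcell_eq]; exact hx
    obtain ⟨y, hy⟩ := this
    exact ⟨y, p, hp, hy⟩
  · rintro ⟨y, p, hp, hy⟩
    refine ⟨FMcell p, ⟨p, hp, rfl⟩, ?_⟩
    rw [FMcell_eq]
    exact ⟨y, hy⟩

end FM

section NF
variable {n : ℕ}

def floorv {n : ℕ} (x : Fin n → ℝ) : Fin n → ℤ := fun j => ⌊x j⌋
def fracv {n : ℕ} (x : Fin n → ℝ) : Fin n → ℝ := fun j => Int.fract (x j)

abbrev NFpiece (n : ℕ) := Set (Fin n → ℤ) × List (List (Constr n))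

def NFset (P : List (NFpiece n)) : Set (Fin n → ℝ) :=
  {x | ∃ pr ∈ P, floorv x ∈ pr.1 ∧ fracv x ∈ SLset pr.2}

def IsNF (X : Set (Fin n → ℝ)) : Prop := ∃ P, X = NFset P

lemma NFset_nil : NFset ([] : List (NFpiece n)) = ∅ := by ext x; simp [NFset]

lemma mem_NFset_singleton (p : NFpiece n) (x : Fin n → ℝ) :
    x ∈ NFset [p] ↔ floorv x ∈ p.1 ∧ fracv x ∈ SLset p.2 := by
  simp only [NFset, Set.mem_setOf_eq, List.mem_cons, List.not_mem_nil, or_false]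
  constructor
  · rintro ⟨pr, rfl, hx⟩; exact hx
  · intro hx; exact ⟨p, rfl, hx⟩

lemma NFset_cons (p : NFpiece n) (P : List (NFpiece n)) :
    NFset (p :: P) = NFset [p] ∪ NFset P := by
  ext x
  simp only [NFset, Set.mem_union, Set.mem_setOf_eq, List.mem_cons, List.not_mem_nil, or_false]
  constructor
  · rintro ⟨pr, (rfl | h), hx⟩
    · exact Or.inl ⟨pr, rfl, hx⟩
    · exact Or.inr ⟨pr, h, hx⟩
  · rintro (⟨pr, rfl, hx⟩ | ⟨pr, h, hx⟩)
    · exact ⟨pr, Or.inl rfl, hx⟩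
    · exact ⟨pr, Or.inr h, hx⟩

lemma NFset_append (P Q : List (NFpiece n)) :
    NFset (P ++ Q) = NFset P ∪ NFset Q := by
  ext x
  simp only [NFset, Set.mem_union, Set.mem_setOf_eq, List.mem_append]
  constructor
  · rintro ⟨pr, (h | h), hx⟩
    · exact Or.inl ⟨pr, h, hx⟩
    · exact Or.inr ⟨pr, h, hx⟩
  · rintro (⟨pr, h, hx⟩ | ⟨pr, h, hx⟩)
    · exact ⟨pr, Or.inl h, hx⟩
    · exact ⟨pr, Or.inr h, hx⟩

lemma IsNF_empty : IsNF (∅ : Set (Fin n → ℝ)) := ⟨[], NFset_nil.symm⟩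

lemma IsNF_univ : IsNF (Set.univ : Set (Fin n → ℝ)) := by
  refine ⟨[(Set.univ, [ [] ])], ?_⟩
  ext x
  simp [NFset, SLset_univ]

lemma IsNF_union {X Y : Set (Fin n → ℝ)} (hX : IsNF X) (hY : IsNF Y) : IsNF (X ∪ Y) := by
  obtain ⟨P, rfl⟩ := hX; obtain ⟨Q, rfl⟩ := hY
  exact ⟨P ++ Q, (NFset_append P Q).symm⟩

lemma IsNF_inter {X Y : Set (Fin n → ℝ)} (hX : IsNF X) (hY : IsNF Y) : IsNF (X ∩ Y) := by
  obtain ⟨P, rfl⟩ := hX; obtain ⟨Q, rfl⟩ := hY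
  refine ⟨P.flatMap (fun p => Q.map (fun q =>
    (p.1 ∩ q.1, Classical.choose (SLset_inter p.2 q.2)))), ?_⟩
  ext x
  simp only [NFset, Set.mem_inter_iff, Set.mem_setOf_eq, List.mem_flatMap, List.mem_map]
  constructor
  · rintro ⟨⟨p, hp, hx1, hx2⟩, ⟨q, hq, hy1, hy2⟩⟩
    refine ⟨_, ⟨p, hp, q, hq, rfl⟩, ⟨hx1, hy1⟩, ?_⟩
    rw [Classical.choose_spec (SLset_inter p.2 q.2)]
    exact ⟨hx2, hy2⟩
  · rintro ⟨pr, ⟨p, hp, q, hq, rfl⟩, ⟨hx1, hy1⟩, hx2⟩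
    rw [Classical.choose_spec (SLset_inter p.2 q.2)] at hx2
    exact ⟨⟨p, hp, hx1, hx2.1⟩, ⟨q, hq, hy1, hx2.2⟩⟩

lemma IsNF_single_compl (p : NFpiece n) : IsNF (NFset [p])ᶜ := by
  obtain ⟨Dc, hDc⟩ := SLset_compl p.2
  refine ⟨[(p.1ᶜ, [ [] ]), (Set.univ, Dc)], ?_⟩
  have hsplit : ([(p.1ᶜ, ([ [] ] : List (List (Constr n)))), (Set.univ, Dc)] : List (NFpiece n))
      = [(p.1ᶜ, ([ [] ] : List (List (Constr n))))] ++ [(Set.univ, Dc)] := rfl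
  ext x
  rw [hsplit, NFset_append]
  simp only [Set.mem_compl_iff, Set.mem_union, mem_NFset_singleton, hDc, SLset_univ,
    Set.mem_univ, true_and, Set.mem_compl_iff]
  tauto

lemma IsNF_compl {X : Set (Fin n → ℝ)} (hX : IsNF X) : IsNF Xᶜ := by
  obtain ⟨P, rfl⟩ := hX
  induction P with
  | nil => rw [NFset_nil, Set.compl_empty]; exact IsNF_univ
  | cons p P ih =>
    rw [NFset_cons, Set.compl_union]
    exact IsNF_inter (IsNF_single_compl p) ih


/-- box constraints `0 ≤ x j < 1` -/
def boxL (n : ℕ) : List (Constr n) :=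
  (List.finRange n).flatMap (fun j =>
    [⟨-(Pi.single j 1), 0, false⟩, ⟨Pi.single j 1, -1, true⟩])

lemma dotv_single (j : Fin n) (c : ℝ) (x : Fin n → ℝ) :
    dotv (Pi.single j c) x = c * x j := by
  simp [dotv, Pi.single_apply, Finset.sum_ite_eq']

lemma mem_boxL_iff (x : Fin n → ℝ) :
    x ∈ Cell (boxL n) ↔ ∀ j, 0 ≤ x j ∧ x j < 1 := by
  constructor
  · intro h j
    have h1 := h ⟨-(Pi.single j 1), 0, false⟩ (by
      simp only [boxL, List.mem_flatMap, List.mem_finRange]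
      exact ⟨j, trivial, by simp⟩)
    have h2 := h ⟨Pi.single j 1, -1, true⟩ (by
      simp only [boxL, List.mem_flatMap, List.mem_finRange]
      exact ⟨j, trivial, by simp⟩)
    simp only [Constr.holds, if_false, if_true, dotv_neg, dotv_single, Bool.false_eq_true] at h1 h2
    constructor <;> linarith
  · intro h c hc
    simp only [boxL, List.mem_flatMap, List.mem_finRange] at hc
    obtain ⟨j, -, hj⟩ := hc
    simp only [List.mem_cons, List.not_mem_nil, or_false] at hj
    rcases hj with rfl | rfl
    · simp only [Constr.holds, Bool.false_eq_true, if_false, dotv_neg, dotv_single]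
      have := (h j).1; linarith
    · simp only [Constr.holds, if_true, dotv_single]
      have := (h j).2; linarith

lemma floorv_snoc (x : Fin n → ℝ) (y : ℝ) :
    floorv (Fin.snoc x y) = Fin.snoc (floorv x) ⌊y⌋ := by
  funext j
  refine Fin.lastCases ?_ (fun i => ?_) j
  · simp [floorv]
  · simp [floorv]

lemma fracv_snoc (x : Fin n → ℝ) (y : ℝ) :
    fracv (Fin.snoc x y) = Fin.snoc (fracv x) (Int.fract y) := by
  funext j
  refine Fin.lastCases ?_ (fun i => ?_) j
  · simp [fracv]
  · simp [fracv]

lemma IsNF_proj {X : Set (Fin (n+1) → ℝ)} (hX : IsNF X) :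
    IsNF {x : Fin n → ℝ | ∃ y : ℝ, Fin.snoc x y ∈ X} := by
  obtain ⟨P, rfl⟩ := hX
  induction P with
  | nil =>
    rw [NFset_nil]
    have : {x : Fin n → ℝ | ∃ y : ℝ, Fin.snoc x y ∈ (∅ : Set (Fin (n+1) → ℝ))} = ∅ := by
      ext x; simp
    rw [this]; exact IsNF_empty
  | cons p P ih =>
    rw [NFset_cons]
    have hsplit : {x : Fin n → ℝ | ∃ y : ℝ, Fin.snoc x y ∈ NFset [p] ∪ NFset P}
        = {x | ∃ y : ℝ, Fin.snoc x y ∈ NFset [p]} ∪ {x | ∃ y : ℝ, Fin.snoc x y ∈ NFset P} := by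
      ext x
      simp only [Set.mem_setOf_eq, Set.mem_union]
      constructor
      · rintro ⟨y, (h | h)⟩
        · exact Or.inl ⟨y, h⟩
        · exact Or.inr ⟨y, h⟩
      · rintro (⟨y, h⟩ | ⟨y, h⟩)
        · exact ⟨y, Or.inl h⟩
        · exact ⟨y, Or.inr h⟩
    rw [hsplit]
    refine IsNF_union ?_ ih
    -- single piece projection
    obtain ⟨Dbox, hDbox⟩ := SLset_inter p.2 [boxL (n+1)]
    obtain ⟨D', hD'⟩ := SLset_proj Dbox
    refine ⟨[({z | ∃ m : ℤ, Fin.snoc z m ∈ p.1}, D')], ?_⟩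
    ext x
    rw [mem_NFset_singleton]
    simp only [Set.mem_setOf_eq, hD', projSet, hDbox]
    constructor
    · rintro ⟨y, hy⟩
      rw [mem_NFset_singleton, floorv_snoc, fracv_snoc] at hy
      refine ⟨⟨⌊y⌋, hy.1⟩, Int.fract y, hy.2, ?_⟩
      have : ∃ cs ∈ [boxL (n+1)], Fin.snoc (fracv x) (Int.fract y) ∈ Cell cs := by
        refine ⟨boxL (n+1), by simp, ?_⟩
        rw [mem_boxL_iff]
        intro j
        refine Fin.lastCases ?_ (fun i => ?_) j
        · simp only [Fin.snoc_last]
          exact ⟨Int.fract_nonneg y, Int.fract_lt_one y⟩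
        · simp only [Fin.snoc_castSucc]
          exact ⟨Int.fract_nonneg _, Int.fract_lt_one _⟩
      exact this
    · rintro ⟨⟨m, hm⟩, dn, hdn, hbox⟩
      obtain ⟨cs, hcs, hcell⟩ := hbox
      simp only [List.mem_cons, List.not_mem_nil, or_false] at hcs
      subst hcs
      rw [mem_boxL_iff] at hcell
      have hdn0 : 0 ≤ dn ∧ dn < 1 := by
        have := hcell (Fin.last n)
        simpa using this
      refine ⟨(m : ℝ) + dn, ?_⟩
      rw [mem_NFset_singleton, floorv_snoc, fracv_snoc]
      have hfloor : ⌊(m : ℝ) + dn⌋ = m := by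
        rw [Int.floor_intCast_add]
        have : ⌊dn⌋ = 0 := Int.floor_eq_zero_iff.mpr ⟨hdn0.1, hdn0.2⟩
        omega
      have hfract : Int.fract ((m : ℝ) + dn) = dn := by
        rw [Int.fract_intCast_add]
        exact Int.fract_eq_self.mpr ⟨hdn0.1, hdn0.2⟩
      rw [hfloor, hfract]
      exact ⟨hm, hdn⟩

end NF

section Atomic
variable {n : ℕ}

def intv (c : Fin n → ℤ) : Fin n → ℝ := fun j => (c j : ℝ)

lemma dotv_floor_fract (c : Fin n → ℤ) (v : Fin n → ℝ) :
    dotv (intv c) v = ((∑ j, c j * floorv v j : ℤ) : ℝ) + dotv (intv c) (fracv v) := by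
  simp only [dotv, intv, floorv, fracv]
  push_cast
  rw [← Finset.sum_add_distrib]
  congr 1
  funext j
  rw [← mul_add, Int.floor_add_fract]

lemma abs_dotv_fracv_le (c : Fin n → ℤ) (v : Fin n → ℝ) :
    |dotv (intv c) (fracv v)| ≤ ((∑ j, |c j| : ℤ) : ℝ) := by
  push_cast
  refine le_trans (Finset.abs_sum_le_sum_abs _ _) (Finset.sum_le_sum fun j _ => ?_)
  rw [abs_mul]
  have h1 : |Int.fract (v j)| ≤ 1 := by
    rw [abs_of_nonneg (Int.fract_nonneg _)]
    exact le_of_lt (Int.fract_lt_one _)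
  calc |(intv c) j| * |Int.fract (v j)| ≤ |(intv c) j| * 1 :=
        mul_le_mul_of_nonneg_left h1 (abs_nonneg _)
    _ = |(c j : ℝ)| := by simp [intv]

/-- the strict halfspace `c · v < 0` (integer coefficients) is NF -/
lemma IsNF_lt (c : Fin n → ℤ) : IsNF {v : Fin n → ℝ | dotv (intv c) v < 0} := by
  set B : ℤ := ∑ j, |c j| with hB
  refine ⟨({z | ∑ j, c j * z j ≤ -(B+1)}, [ [] ]) ::
    ((Finset.Icc (-B) B).toList.map (fun m =>
      ({z | ∑ j, c j * z j = m}, [ [⟨intv c, (m : ℝ), true⟩] ]))), ?_⟩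
  ext v
  rw [NFset_cons]
  set N : ℤ := ∑ j, c j * floorv v j with hN
  set f : ℝ := dotv (intv c) (fracv v) with hf
  have hsum : dotv (intv c) v = (N : ℝ) + f := dotv_floor_fract c v
  have hfb : |f| ≤ (B : ℝ) := abs_dotv_fracv_le c v
  have hfb1 : -(B:ℝ) ≤ f := neg_le_of_abs_le hfb
  have hfb2 : f ≤ (B:ℝ) := le_of_abs_le hfb
  simp only [Set.mem_setOf_eq, Set.mem_union, mem_NFset_singleton, hsum]
  constructor
  · intro h
    by_cases hlow : N ≤ -(B+1)
    · left
      refine ⟨hlow, ?_⟩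
      rw [SLset_univ]; trivial
    · right
      push_neg at hlow
      have hub : N ≤ B := by
        by_contra hc
        push_neg at hc
        have : (B:ℝ) + 1 ≤ (N:ℝ) := by exact_mod_cast hc
        linarith
      refine ⟨_, List.mem_map.mpr ⟨N, Finset.mem_toList.mpr (Finset.mem_Icc.mpr ⟨by omega, hub⟩), rfl⟩, rfl, ?_⟩
      refine ⟨_, List.mem_singleton_self _, ?_⟩
      intro cn hcn
      simp only [List.mem_singleton] at hcn
      subst hcn
      simp only [Constr.holds, if_true]
      linarith
  · rintro (h | h)
    · have h1 : (N : ℝ) ≤ -(B:ℝ) - 1 := by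
        have := h.1
        have : (N:ℝ) ≤ (-(B+1) : ℤ) := by exact_mod_cast this
        push_cast at this
        linarith
      linarith
    · obtain ⟨pr, hpr, h1, h2⟩ := h
      rw [List.mem_map] at hpr
      obtain ⟨m, hm, rfl⟩ := hpr
      simp only [Set.mem_setOf_eq] at h1
      obtain ⟨cs, hcs, hcell⟩ := h2
      simp only [List.mem_singleton] at hcs
      subst hcs
      have := hcell ⟨intv c, (m:ℝ), true⟩ (List.mem_singleton_self _)
      simp only [Constr.holds, if_true] at this
      have hNm : (N : ℝ) = (m : ℝ) := by exact_mod_cast h1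
      linarith

/-- the hyperplane `c · v = 0` (integer coefficients) is NF -/
lemma IsNF_eq (c : Fin n → ℤ) : IsNF {v : Fin n → ℝ | dotv (intv c) v = 0} := by
  set B : ℤ := ∑ j, |c j| with hB
  refine ⟨(Finset.Icc (-B) B).toList.map (fun m =>
      ({z | ∑ j, c j * z j = m}, [ [⟨intv c, (m : ℝ), false⟩, ⟨-(intv c), -(m : ℝ), false⟩] ])), ?_⟩
  ext v
  set N : ℤ := ∑ j, c j * floorv v j with hN
  set f : ℝ := dotv (intv c) (fracv v) with hf
  have hsum : dotv (intv c) v = (N : ℝ) + f := dotv_floor_fract c v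
  have hfb : |f| ≤ (B : ℝ) := abs_dotv_fracv_le c v
  have hfb1 : -(B:ℝ) ≤ f := neg_le_of_abs_le hfb
  have hfb2 : f ≤ (B:ℝ) := le_of_abs_le hfb
  simp only [Set.mem_setOf_eq, hsum, NFset]
  constructor
  · intro h
    have hfN : f = -(N:ℝ) := by linarith
    have hNb : N ∈ Finset.Icc (-B) B := by
      rw [Finset.mem_Icc]
      constructor
      · by_contra hc
        push_neg at hc
        have : (N:ℝ) < -(B:ℝ) := by exact_mod_cast hc
        rw [hfN] at hfb2
        linarith
      · by_contra hc
        push_neg at hc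
        have : (B:ℝ) < (N:ℝ) := by exact_mod_cast hc
        rw [hfN] at hfb1
        linarith
    refine ⟨_, List.mem_map.mpr ⟨N, Finset.mem_toList.mpr hNb, rfl⟩, hN.symm, ?_⟩
    refine ⟨_, List.mem_singleton_self _, ?_⟩
    intro cn hcn
    simp only [List.mem_cons, List.not_mem_nil, or_false] at hcn
    rcases hcn with rfl | rfl
    · simp only [Constr.holds, Bool.false_eq_true, if_false]
      push_cast
      linarith
    · simp only [Constr.holds, Bool.false_eq_true, if_false, dotv_neg]
      push_cast
      linarith
  · rintro ⟨pr, hpr, h1, h2⟩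
    rw [List.mem_map] at hpr
    obtain ⟨m, hm, rfl⟩ := hpr
    simp only [Set.mem_setOf_eq] at h1
    obtain ⟨cs, hcs, hcell⟩ := h2
    simp only [List.mem_singleton] at hcs
    subst hcs
    have e1 := hcell ⟨intv c, (m:ℝ), false⟩ (by simp)
    have e2 := hcell ⟨-(intv c), -(m:ℝ), false⟩ (by simp)
    simp only [Constr.holds, Bool.false_eq_true, if_false, dotv_neg] at e1 e2
    have hNm : (N : ℝ) = (m : ℝ) := by exact_mod_cast h1
    linarith

/-- the set `c · v ∈ ℤ` (integer coefficients) is NF -/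
lemma IsNF_int (c : Fin n → ℤ) : IsNF {v : Fin n → ℝ | ∃ k : ℤ, dotv (intv c) v = (k : ℝ)} := by
  set B : ℤ := ∑ j, |c j| with hB
  refine ⟨(Finset.Icc (-B) B).toList.map (fun (m : ℤ) =>
      ((Set.univ : Set (Fin n → ℤ)),
        [ [⟨intv c, -(m : ℝ), false⟩, ⟨-(intv c), (m : ℝ), false⟩] ])), ?_⟩
  ext v
  set N : ℤ := ∑ j, c j * floorv v j with hN
  set f : ℝ := dotv (intv c) (fracv v) with hf
  have hsum : dotv (intv c) v = (N : ℝ) + f := dotv_floor_fract c v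
  have hfb : |f| ≤ (B : ℝ) := abs_dotv_fracv_le c v
  have hfb1 : -(B:ℝ) ≤ f := neg_le_of_abs_le hfb
  have hfb2 : f ≤ (B:ℝ) := le_of_abs_le hfb
  simp only [Set.mem_setOf_eq, hsum, NFset]
  constructor
  · rintro ⟨k, hk⟩
    have hfk : f = ((k - N : ℤ) : ℝ) := by push_cast; linarith
    have hmb : (k - N) ∈ Finset.Icc (-B) B := by
      rw [Finset.mem_Icc]
      constructor
      · by_contra hc
        push_neg at hc
        have : ((k - N : ℤ):ℝ) < -(B:ℝ) := by exact_mod_cast hc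
        linarith [hfk ▸ hfb1]
      · by_contra hc
        push_neg at hc
        have : (B:ℝ) < ((k - N:ℤ):ℝ) := by exact_mod_cast hc
        linarith [hfk ▸ hfb2]
    have h3 : dotv (intv c) (fracv v) = ((k - N : ℤ) : ℝ) := by rw [← hf]; exact hfk
    refine ⟨((Set.univ : Set (Fin n → ℤ)),
      [ [⟨intv c, -((k - N : ℤ) : ℝ), false⟩, ⟨-(intv c), ((k - N : ℤ) : ℝ), false⟩] ]),
      List.mem_map.mpr ⟨k - N, Finset.mem_toList.mpr hmb, rfl⟩, trivial, ?_⟩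
    refine ⟨_, List.mem_singleton_self _, ?_⟩
    intro cn hcn
    simp only [List.mem_cons, List.not_mem_nil, or_false] at hcn
    rcases hcn with rfl | rfl
    · simp only [Constr.holds, Bool.false_eq_true, if_false]
      rw [h3]; push_cast; linarith
    · simp only [Constr.holds, Bool.false_eq_true, if_false, dotv_neg]
      rw [h3]; push_cast; linarith
  · rintro ⟨pr, hpr, -, h2⟩
    rw [List.mem_map] at hpr
    obtain ⟨m, hm, rfl⟩ := hpr
    obtain ⟨cs, hcs, hcell⟩ := h2
    simp only [List.mem_singleton] at hcs
    subst hcs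
    have e1 := hcell ⟨intv c, -(m:ℝ), false⟩ (by simp)
    have e2 := hcell ⟨-(intv c), (m:ℝ), false⟩ (by simp)
    simp only [Constr.holds, Bool.false_eq_true, if_false, dotv_neg] at e1 e2
    have : f = (m:ℝ) := by linarith
    exact ⟨N + m, by rw [this]; push_cast; ring⟩

end Atomic

section ModelTheory
open FirstOrder
open FirstOrder.Language

lemma dotv_intv_add {N : ℕ} (c d : Fin N → ℤ) (v : Fin N → ℝ) :
    dotv (intv (c + d)) v = dotv (intv c) v + dotv (intv d) v := by
  simp [dotv, intv, add_mul, Finset.sum_add_distrib]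

lemma dotv_intv_sub {N : ℕ} (c d : Fin N → ℤ) (v : Fin N → ℝ) :
    dotv (intv (c - d)) v = dotv (intv c) v - dotv (intv d) v := by
  simp [dotv, intv, sub_mul, Finset.sum_sub_distrib]

lemma term_lin {γ : Type} {N : ℕ} (emb : γ → Fin N) (t : LsLang.Term γ) :
    ∃ c : Fin N → ℤ, ∀ v : Fin N → ℝ, t.realize (fun s => v (emb s)) = dotv (intv c) v := by
  induction t with
  | var s =>
    refine ⟨fun j => if j = emb s then 1 else 0, fun v => ?_⟩
    simp only [Language.Term.realize_var, dotv, intv]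
    rw [Finset.sum_eq_single (emb s)]
    · simp
    · intro j _ hj
      simp [hj]
    · intro h
      exact absurd (Finset.mem_univ _) h
  | @func l f ts ih =>
    match l, f with
    | 2, f =>
      obtain ⟨c0, hc0⟩ := ih 0
      obtain ⟨c1, hc1⟩ := ih 1
      refine ⟨c0 + c1, fun v => ?_⟩
      have : (Language.Term.func f ts).realize (fun s => v (emb s))
          = (ts 0).realize (fun s => v (emb s)) + (ts 1).realize (fun s => v (emb s)) := rfl
      rw [this, hc0, hc1, dotv_intv_add]

lemma realize_lt {l : ℕ} (R : LsLang.Relations 2) (x : Fin 2 → ℝ) :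
    Language.Structure.RelMap R x ↔ x 0 < x 1 := Iff.rfl

lemma NF_main {n : ℕ} : ∀ (k : ℕ) (φ : LsLang.BoundedFormula (Fin n) k),
    IsNF {v : Fin (n+k) → ℝ |
      φ.Realize (fun i => v (Fin.castAdd k i)) (fun i => v (Fin.natAdd n i))} := by
  intro k φ
  induction φ with
  | @falsum k =>
    have h : {v : Fin (n+k) → ℝ |
        (BoundedFormula.falsum : LsLang.BoundedFormula (Fin n) k).Realize
          (fun i => v (Fin.castAdd k i)) (fun i => v (Fin.natAdd n i))} = ∅ := by
      ext v; simp [BoundedFormula.Realize]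
    rw [h]
    exact IsNF_empty
  | @equal k t₁ t₂ =>
    obtain ⟨c₁, hc₁⟩ := term_lin (Sum.elim (Fin.castAdd k) (Fin.natAdd n)) t₁
    obtain ⟨c₂, hc₂⟩ := term_lin (Sum.elim (Fin.castAdd k) (Fin.natAdd n)) t₂
    have hX : {v : Fin (n+k) → ℝ |
        (BoundedFormula.equal t₁ t₂).Realize (fun i => v (Fin.castAdd k i))
          (fun i => v (Fin.natAdd n i))}
        = {v | dotv (intv (c₁ - c₂)) v = 0} := by
      ext v
      have helim : (Sum.elim (fun i => v (Fin.castAdd k i)) (fun i => v (Fin.natAdd n i)))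
          = fun s => v (Sum.elim (Fin.castAdd k) (Fin.natAdd n) s) := by
        funext s; cases s <;> rfl
      simp only [Set.mem_setOf_eq, BoundedFormula.Realize, helim, hc₁, hc₂, dotv_intv_sub]
      constructor <;> intro h <;> linarith
    rw [hX]
    exact IsNF_eq _
  | @rel k l R ts =>
    match l, R with
    | 1, R =>
      obtain ⟨c, hc⟩ := term_lin (Sum.elim (Fin.castAdd k) (Fin.natAdd n)) (ts 0)
      have hX : {v : Fin (n+k) → ℝ |
          (BoundedFormula.rel R ts).Realize (fun i => v (Fin.castAdd k i))
            (fun i => v (Fin.natAdd n i))}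
          = {v | ∃ m : ℤ, dotv (intv c) v = (m : ℝ)} := by
        ext v
        have helim : (Sum.elim (fun i => v (Fin.castAdd k i)) (fun i => v (Fin.natAdd n i)))
            = fun s => v (Sum.elim (Fin.castAdd k) (Fin.natAdd n) s) := by
          funext s; cases s <;> rfl
        have : (BoundedFormula.rel R ts).Realize (fun i => v (Fin.castAdd k i))
            (fun i => v (Fin.natAdd n i))
            ↔ ∃ m : ℤ, (ts 0).realize (Sum.elim (fun i => v (Fin.castAdd k i))
              (fun i => v (Fin.natAdd n i))) = (m : ℝ) := Iff.rfl
        rw [Set.mem_setOf_eq, this, helim]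
        simp only [hc, Set.mem_setOf_eq]
      rw [hX]
      exact IsNF_int _
    | 2, R =>
      obtain ⟨c₁, hc₁⟩ := term_lin (Sum.elim (Fin.castAdd k) (Fin.natAdd n)) (ts 0)
      obtain ⟨c₂, hc₂⟩ := term_lin (Sum.elim (Fin.castAdd k) (Fin.natAdd n)) (ts 1)
      have hX : {v : Fin (n+k) → ℝ |
          (BoundedFormula.rel R ts).Realize (fun i => v (Fin.castAdd k i))
            (fun i => v (Fin.natAdd n i))}
          = {v | dotv (intv (c₁ - c₂)) v < 0} := by
        ext v
        have helim : (Sum.elim (fun i => v (Fin.castAdd k i)) (fun i => v (Fin.natAdd n i)))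
            = fun s => v (Sum.elim (Fin.castAdd k) (Fin.natAdd n) s) := by
          funext s; cases s <;> rfl
        have : (BoundedFormula.rel R ts).Realize (fun i => v (Fin.castAdd k i))
            (fun i => v (Fin.natAdd n i))
            ↔ (ts 0).realize (Sum.elim (fun i => v (Fin.castAdd k i))
              (fun i => v (Fin.natAdd n i)))
              < (ts 1).realize (Sum.elim (fun i => v (Fin.castAdd k i))
              (fun i => v (Fin.natAdd n i))) := Iff.rfl
        rw [Set.mem_setOf_eq, this, helim]
        simp only [hc₁, hc₂, Set.mem_setOf_eq, dotv_intv_sub]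
        constructor <;> intro h <;> linarith
      rw [hX]
      exact IsNF_lt _
  | @imp k φ ψ ihφ ihψ =>
    have hX : {v : Fin (n+k) → ℝ |
        (φ.imp ψ).Realize (fun i => v (Fin.castAdd k i)) (fun i => v (Fin.natAdd n i))}
        = {v : Fin (n+k) → ℝ |
            φ.Realize (fun i => v (Fin.castAdd k i)) (fun i => v (Fin.natAdd n i))}ᶜ
          ∪ {v : Fin (n+k) → ℝ |
            ψ.Realize (fun i => v (Fin.castAdd k i)) (fun i => v (Fin.natAdd n i))} := by
      ext v
      simp only [Set.mem_setOf_eq, Set.mem_union, Set.mem_compl_iff, BoundedFormula.realize_imp]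
      tauto
    rw [hX]
    exact IsNF_union (IsNF_compl ihφ) ihψ
  | @all k φ ih =>
    have hsnoc : ∀ (v : Fin (n+k) → ℝ) (y : ℝ),
        ((fun i => (Fin.snoc v y : Fin (n+k+1) → ℝ) (Fin.castAdd (k+1) i)) = fun i => v (Fin.castAdd k i))
        ∧ ((fun i => (Fin.snoc v y : Fin (n+k+1) → ℝ) (Fin.natAdd n i))
            = Fin.snoc (fun i => v (Fin.natAdd n i)) y) := by
      intro v y
      constructor
      · funext i
        have h1 : (Fin.castAdd (k+1) i : Fin (n+k+1)) = Fin.castSucc (Fin.castAdd k i) :=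
          Fin.ext rfl
        rw [h1, Fin.snoc_castSucc]
      · funext i
        refine Fin.lastCases ?_ (fun j => ?_) i
        · have h1 : (Fin.natAdd n (Fin.last k) : Fin (n+k+1)) = Fin.last (n+k) := Fin.ext rfl
          rw [h1, Fin.snoc_last, Fin.snoc_last]
        · have h1 : (Fin.natAdd n (Fin.castSucc j) : Fin (n+k+1))
              = Fin.castSucc (Fin.natAdd n j) := Fin.ext rfl
          rw [h1, Fin.snoc_castSucc, Fin.snoc_castSucc]
    have hX : {v : Fin (n+k) → ℝ |
        (φ.all).Realize (fun i => v (Fin.castAdd k i)) (fun i => v (Fin.natAdd n i))}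
        = {v : Fin (n+k) → ℝ | ∃ y : ℝ, Fin.snoc v y ∈
            {u : Fin (n+(k+1)) → ℝ | φ.Realize (fun i => u (Fin.castAdd (k+1) i))
              (fun i => u (Fin.natAdd n i))}ᶜ }ᶜ := by
      ext v
      simp only [Set.mem_setOf_eq, Set.mem_compl_iff, BoundedFormula.realize_all, not_exists,
        not_not]
      constructor
      · intro h y
        show φ.Realize (fun i => (Fin.snoc v y : Fin (n+k+1) → ℝ) (Fin.castAdd (k+1) i))
          (fun i => (Fin.snoc v y : Fin (n+k+1) → ℝ) (Fin.natAdd n i))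
        rw [(hsnoc v y).1, (hsnoc v y).2]
        exact h y
      · intro h y
        have h' : φ.Realize (fun i => (Fin.snoc v y : Fin (n+k+1) → ℝ) (Fin.castAdd (k+1) i))
            (fun i => (Fin.snoc v y : Fin (n+k+1) → ℝ) (Fin.natAdd n i)) := h y
        rw [(hsnoc v y).1, (hsnoc v y).2] at h'
        exact h'
    rw [hX]
    exact IsNF_compl (IsNF_proj (IsNF_compl ih))

lemma LsDefinable.isNF {n : ℕ} {X : Set (Fin n → ℝ)} (hX : LsDefinable X) : IsNF X := by
  rw [LsDefinable, Set.empty_definable_iff] at hX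
  obtain ⟨φ, rfl⟩ := hX
  have h := NF_main (n := n) 0 φ
  have hX : {v : Fin n → ℝ | φ.Realize v}
      = {v : Fin (n+0) → ℝ | BoundedFormula.Realize φ
          (fun i => v (Fin.castAdd 0 i)) (fun i => v (Fin.natAdd n i))} := by
    ext v
    have key : ∀ xs ys : Fin 0 → ℝ,
        BoundedFormula.Realize φ v xs ↔ BoundedFormula.Realize φ v ys := fun xs ys => by
      rw [Subsingleton.elim xs ys]
    exact ⟨fun hr => (key _ _).mp hr, fun hr => (key _ _).mp hr⟩
  rw [hX]
  exact h

end ModelTheory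

section Germ
variable {n : ℕ}

lemma shift_nonzero (a w : ℝ) (h2 : |w| < Int.fract a) (h3 : |w| < 1 - Int.fract a) :
    ⌊a + w⌋ = ⌊a⌋ ∧ Int.fract (a + w) = Int.fract a + w := by
  obtain ⟨hw1, hw2⟩ := abs_lt.mp h2
  obtain ⟨hw3, hw4⟩ := abs_lt.mp h3
  have ha : Int.fract a = a - ⌊a⌋ := rfl
  have hfl : ⌊a + w⌋ = ⌊a⌋ := by
    rw [Int.floor_eq_iff]
    constructor <;> push_cast <;> linarith
  refine ⟨hfl, ?_⟩
  have : Int.fract (a + w) = a + w - ⌊a + w⌋ := rfl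
  rw [this, hfl, ha]
  ring

lemma shift_zero_nonneg (a w : ℝ) (hf : Int.fract a = 0) (h0 : 0 ≤ w) (h1 : w < 1) :
    ⌊a + w⌋ = ⌊a⌋ ∧ Int.fract (a + w) = w := by
  have ha : a = (⌊a⌋ : ℝ) := by
    have : Int.fract a = a - ⌊a⌋ := rfl
    rw [this] at hf; linarith
  have hfl : ⌊a + w⌋ = ⌊a⌋ := by
    rw [Int.floor_eq_iff]
    constructor <;> push_cast <;> linarith
  refine ⟨hfl, ?_⟩
  have h2 : Int.fract (a + w) = a + w - ⌊a + w⌋ := rfl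
  rw [h2, hfl]
  linarith

lemma shift_zero_neg (a w : ℝ) (hf : Int.fract a = 0) (h0 : w < 0) (h1 : -1 < w) :
    ⌊a + w⌋ = ⌊a⌋ - 1 ∧ Int.fract (a + w) = 1 + w := by
  have ha : a = (⌊a⌋ : ℝ) := by
    have : Int.fract a = a - ⌊a⌋ := rfl
    rw [this] at hf; linarith
  have hfl : ⌊a + w⌋ = ⌊a⌋ - 1 := by
    rw [Int.floor_eq_iff]
    constructor <;> push_cast <;> linarith
  refine ⟨hfl, ?_⟩
  have h2 : Int.fract (a + w) = a + w - ⌊a + w⌋ := rfl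
  rw [h2, hfl]
  push_cast
  linarith

def oneS (S : Fin n → Bool) : Fin n → ℝ := fun j => if S j then 1 else 0
def intS (S : Fin n → Bool) : Fin n → ℤ := fun j => if S j then 1 else 0

def allC (P : List (NFpiece n)) : List (Constr n) := P.flatMap (fun pr => pr.2.flatten)

lemma mem_allC {P : List (NFpiece n)} {pr : NFpiece n} {cs : List (Constr n)} {c : Constr n}
    (hpr : pr ∈ P) (hcs : cs ∈ pr.2) (hc : c ∈ cs) : c ∈ allC P :=
  List.mem_flatMap.mpr ⟨pr, hpr, List.mem_flatten.mpr ⟨cs, hcs, hc⟩⟩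

lemma abs_dotv_le (a w : Fin n → ℝ) : |dotv a w| ≤ ‖w‖ * ∑ j, |a j| := by
  refine le_trans (Finset.abs_sum_le_sum_abs _ _) ?_
  rw [Finset.mul_sum]
  refine Finset.sum_le_sum fun j _ => ?_
  rw [abs_mul, mul_comm]
  refine mul_le_mul_of_nonneg_right ?_ (abs_nonneg _)
  have := norm_le_pi_norm w j
  simpa [Real.norm_eq_abs] using this

lemma exists_good_r (P : List (NFpiece n)) (x : Fin n → ℝ) :
    ∃ r > (0:ℝ), r ≤ 1 ∧ ∀ w : Fin n → ℝ, ‖w‖ < r →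
      (∀ j, |w j| < 1 ∧ (Int.fract (x j) ≠ 0 →
          |w j| < Int.fract (x j) ∧ |w j| < 1 - Int.fract (x j)))
      ∧ ∀ c ∈ allC P, ∀ S : Fin n → Bool,
          dotv c.a (fracv x + oneS S) + c.b ≠ 0 →
          |dotv c.a w| < |dotv c.a (fracv x + oneS S) + c.b| := by
  classical
  set F : Finset ℝ := insert 1
    ((Finset.univ.image (fun j : Fin n => if Int.fract (x j) = 0 then (1:ℝ)
        else min (Int.fract (x j)) (1 - Int.fract (x j))))
      ∪ ((allC P).toFinset ×ˢ (Finset.univ : Finset (Fin n → Bool))).image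
        (fun p => if dotv p.1.a (fracv x + oneS p.2) + p.1.b = 0 then (1:ℝ)
          else |dotv p.1.a (fracv x + oneS p.2) + p.1.b| / ((∑ j, |p.1.a j|) + 1))) with hF
  have hne : F.Nonempty := ⟨1, Finset.mem_insert_self _ _⟩
  have hpos : ∀ z ∈ F, 0 < z := by
    intro z hz
    rw [hF, Finset.mem_insert, Finset.mem_union] at hz
    rcases hz with rfl | hz | hz
    · norm_num
    · obtain ⟨j, -, rfl⟩ := Finset.mem_image.mp hz
      split_ifs with h
      · norm_num
      · refine lt_min ?_ ?_
        · rcases lt_or_eq_of_le (Int.fract_nonneg (x j)) with h' | h'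
          · exact h'
          · exact absurd h'.symm h
        · linarith [Int.fract_lt_one (x j)]
    · obtain ⟨p, -, rfl⟩ := Finset.mem_image.mp hz
      split_ifs with h
      · norm_num
      · have h1 : 0 < |dotv p.1.a (fracv x + oneS p.2) + p.1.b| := abs_pos.mpr h
        have h2 : (0:ℝ) < (∑ j, |p.1.a j|) + 1 := by positivity
        positivity
  set r := F.min' hne with hr
  have hr0 : 0 < r := hpos _ (F.min'_mem hne)
  have hr1 : r ≤ 1 := Finset.min'_le _ _ (Finset.mem_insert_self _ _)
  refine ⟨r, hr0, hr1, fun w hw => ⟨fun j => ?_, fun c hc S hV => ?_⟩⟩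
  · have hwj : |w j| ≤ ‖w‖ := by
      have := norm_le_pi_norm w j
      simpa [Real.norm_eq_abs] using this
    constructor
    · linarith
    · intro hfj
      have hmem : (min (Int.fract (x j)) (1 - Int.fract (x j))) ∈ F := by
        rw [hF]
        refine Finset.mem_insert_of_mem (Finset.mem_union_left _ (Finset.mem_image.mpr
          ⟨j, Finset.mem_univ _, ?_⟩))
        rw [if_neg hfj]
      have := Finset.min'_le _ _ hmem
      constructor
      · calc |w j| ≤ ‖w‖ := hwj
          _ < r := hw
          _ ≤ _ := this
          _ ≤ _ := min_le_left _ _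
      · calc |w j| ≤ ‖w‖ := hwj
          _ < r := hw
          _ ≤ _ := this
          _ ≤ _ := min_le_right _ _
  · have hmem : |dotv c.a (fracv x + oneS S) + c.b| / ((∑ j, |c.a j|) + 1) ∈ F := by
      rw [hF]
      refine Finset.mem_insert_of_mem (Finset.mem_union_right _ (Finset.mem_image.mpr
        ⟨(c, S), Finset.mem_product.mpr ⟨List.mem_toFinset.mpr hc, Finset.mem_univ _⟩, ?_⟩))
      rw [if_neg hV]
    have hle := Finset.min'_le _ _ hmem
    have hsum : (0:ℝ) ≤ ∑ j, |c.a j| := Finset.sum_nonneg fun j _ => abs_nonneg _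
    have h2 : (0:ℝ) < (∑ j, |c.a j|) + 1 := by linarith
    calc |dotv c.a w| ≤ ‖w‖ * ∑ j, |c.a j| := abs_dotv_le _ _
      _ ≤ ‖w‖ * ((∑ j, |c.a j|) + 1) := by
          refine mul_le_mul_of_nonneg_left (by linarith) (norm_nonneg _)
      _ < r * ((∑ j, |c.a j|) + 1) := by
          exact mul_lt_mul_of_pos_right hw h2
      _ ≤ (|dotv c.a (fracv x + oneS S) + c.b| / ((∑ j, |c.a j|) + 1)) * ((∑ j, |c.a j|) + 1) := by
          exact mul_le_mul_of_nonneg_right hle (le_of_lt h2)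
      _ = |dotv c.a (fracv x + oneS S) + c.b| := div_mul_cancel₀ _ (ne_of_gt h2)

lemma holds_iff_sign (c : Constr n) (u : Fin n → ℝ) (V dw : ℝ)
    (hval : dotv c.a u + c.b = V + dw) (hV : V ≠ 0) (hlt : |dw| < |V|) :
    (c.holds u ↔ V < 0) := by
  obtain ⟨h1, h2⟩ := abs_lt.mp hlt
  rcases lt_or_gt_of_ne hV with hneg | hpos
  · rw [abs_of_neg hneg] at h1 h2
    cases hs : c.strict <;> simp only [Constr.holds, hs, Bool.false_eq_true, if_false, if_true]
      <;> constructor <;> intro h <;> first | linarith | (exact hneg)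
  · rw [abs_of_pos hpos] at h1 h2
    cases hs : c.strict <;> simp only [Constr.holds, hs, Bool.false_eq_true, if_false, if_true]
      <;> constructor <;> intro h <;> linarith


lemma coord_claims (a wj : ℝ) (haw1 : |wj| < 1)
    (haw2 : Int.fract a ≠ 0 → |wj| < Int.fract a ∧ |wj| < 1 - Int.fract a)
    (b : Bool) (hb : b = true ↔ (Int.fract a = 0 ∧ wj < 0)) :
    ⌊a + wj⌋ = ⌊a⌋ - (if b then 1 else 0)
      ∧ Int.fract (a + wj) = Int.fract a + wj + (if b then (1:ℝ) else 0) := by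
  obtain ⟨hw1, hw2⟩ := abs_lt.mp haw1
  by_cases hf : Int.fract a = 0
  · by_cases hw : wj < 0
    · have hbt : b = true := hb.mpr ⟨hf, hw⟩
      obtain ⟨f1, f2⟩ := shift_zero_neg a wj hf hw hw1
      rw [hbt, if_pos rfl, if_pos rfl, f1, f2, hf]
      exact ⟨rfl, by ring⟩
    · have hbf : b = false := by
        cases hb' : b
        · rfl
        · exact absurd (hb.mp hb').2 hw
      push_neg at hw
      obtain ⟨f1, f2⟩ := shift_zero_nonneg a wj hf hw hw2
      rw [hbf]
      simp only [Bool.false_eq_true, if_false]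
      rw [f1, f2, hf]
      exact ⟨by ring, by ring⟩
  · have hbf : b = false := by
      cases hb' : b
      · rfl
      · exact absurd (hb.mp hb').1 hf
    obtain ⟨h2', h3'⟩ := haw2 hf
    obtain ⟨f1, f2⟩ := shift_nonzero a wj h2' h3'
    rw [hbf]
    simp only [Bool.false_eq_true, if_false]
    rw [f1, f2]
    exact ⟨by ring, by ring⟩

lemma simX_of_NF (P : List (NFpiece n)) (x y : Fin n → ℝ)
    (hJ : ∀ j, (Int.fract (x j) = 0 ↔ Int.fract (y j) = 0))
    (hZ : ∀ (i : Fin P.length) (S : Fin n → Bool),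
       ((floorv x - intS S) ∈ (P.get i).1 ↔ (floorv y - intS S) ∈ (P.get i).1))
    (hC : ∀ c ∈ allC P, ∀ S : Fin n → Bool,
       ((dotv c.a (fracv x + oneS S) + c.b < 0 ↔ dotv c.a (fracv y + oneS S) + c.b < 0)
        ∧ (dotv c.a (fracv x + oneS S) + c.b = 0 ↔ dotv c.a (fracv y + oneS S) + c.b = 0))) :
    SimX (NFset P) x y := by
  obtain ⟨rx, hrx0, hrx1, hgx⟩ := exists_good_r P x
  obtain ⟨ry, hry0, hry1, hgy⟩ := exists_good_r P y
  refine ⟨min rx ry, lt_min hrx0 hry0, fun w hw => ?_⟩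
  obtain ⟨hwx1, hwx2⟩ := hgx w (lt_of_lt_of_le hw (min_le_left _ _))
  obtain ⟨hwy1, hwy2⟩ := hgy w (lt_of_lt_of_le hw (min_le_right _ _))
  set S : Fin n → Bool := (fun j => if Int.fract (x j) = 0 ∧ w j < 0 then true else false)
    with hS
  have hSiff : ∀ j, S j = true ↔ (Int.fract (x j) = 0 ∧ w j < 0) := by
    intro j
    by_cases h : Int.fract (x j) = 0 ∧ w j < 0
    · simp [hS, h]
    · simp only [hS, if_neg h, Bool.false_eq_true, false_iff]
      exact h
  have hSiffy : ∀ j, S j = true ↔ (Int.fract (y j) = 0 ∧ w j < 0) := by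
    intro j
    rw [hSiff j]
    exact and_congr_left' (hJ j)
  have clx1 : floorv (x + w) = floorv x - intS S := by
    funext j
    have := (coord_claims (x j) (w j) (hwx1 j).1 (hwx1 j).2 (S j) (hSiff j)).1
    simpa [floorv, intS, Pi.sub_apply] using this
  have clx2 : fracv (x + w) = fracv x + w + oneS S := by
    funext j
    have := (coord_claims (x j) (w j) (hwx1 j).1 (hwx1 j).2 (S j) (hSiff j)).2
    simpa [fracv, oneS, Pi.add_apply] using this
  have cly1 : floorv (y + w) = floorv y - intS S := by
    funext j
    have := (coord_claims (y j) (w j) (hwy1 j).1 (hwy1 j).2 (S j) (hSiffy j)).1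
    simpa [floorv, intS, Pi.sub_apply] using this
  have cly2 : fracv (y + w) = fracv y + w + oneS S := by
    funext j
    have := (coord_claims (y j) (w j) (hwy1 j).1 (hwy1 j).2 (S j) (hSiffy j)).2
    simpa [fracv, oneS, Pi.add_apply] using this
  have hkey : ∀ c ∈ allC P,
      (c.holds (fracv x + w + oneS S) ↔ c.holds (fracv y + w + oneS S)) := by
    intro c hc
    have hvx : dotv c.a (fracv x + w + oneS S) + c.b
        = (dotv c.a (fracv x + oneS S) + c.b) + dotv c.a w := by
      rw [dotv_add, dotv_add, dotv_add]
      ring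
    have hvy : dotv c.a (fracv y + w + oneS S) + c.b
        = (dotv c.a (fracv y + oneS S) + c.b) + dotv c.a w := by
      rw [dotv_add, dotv_add, dotv_add]
      ring
    by_cases hV : dotv c.a (fracv x + oneS S) + c.b = 0
    · have hVy : dotv c.a (fracv y + oneS S) + c.b = 0 := (hC c hc S).2.mp hV
      have heq : dotv c.a (fracv x + w + oneS S) + c.b
          = dotv c.a (fracv y + w + oneS S) + c.b := by
        rw [hvx, hvy, hV, hVy]
      unfold Constr.holds
      rw [heq]
    · have hVy : dotv c.a (fracv y + oneS S) + c.b ≠ 0 := fun h => hV ((hC c hc S).2.mpr h)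
      rw [holds_iff_sign c _ _ (dotv c.a w) hvx hV (hwx2 c hc S hV),
          holds_iff_sign c _ _ (dotv c.a w) hvy hVy (hwy2 c hc S hVy)]
      exact (hC c hc S).1
  have memx : (x + w ∈ NFset P) ↔ ∃ i : Fin P.length,
      (floorv x - intS S) ∈ (P.get i).1 ∧ (fracv x + w + oneS S) ∈ SLset (P.get i).2 := by
    show (∃ pr ∈ P, floorv (x+w) ∈ pr.1 ∧ fracv (x+w) ∈ SLset pr.2) ↔ _
    rw [clx1, clx2]
    constructor
    · rintro ⟨pr, hpr, h⟩
      obtain ⟨i, hi⟩ := List.mem_iff_get.mp hpr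
      exact ⟨i, by rw [hi]; exact h⟩
    · rintro ⟨i, h⟩
      exact ⟨P.get i, List.get_mem P i, h⟩
  have memy : (y + w ∈ NFset P) ↔ ∃ i : Fin P.length,
      (floorv y - intS S) ∈ (P.get i).1 ∧ (fracv y + w + oneS S) ∈ SLset (P.get i).2 := by
    show (∃ pr ∈ P, floorv (y+w) ∈ pr.1 ∧ fracv (y+w) ∈ SLset pr.2) ↔ _
    rw [cly1, cly2]
    constructor
    · rintro ⟨pr, hpr, h⟩
      obtain ⟨i, hi⟩ := List.mem_iff_get.mp hpr
      exact ⟨i, by rw [hi]; exact h⟩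
    · rintro ⟨i, h⟩
      exact ⟨P.get i, List.get_mem P i, h⟩
  rw [memx, memy]
  refine exists_congr fun i => and_congr (hZ i S) ?_
  show (∃ cs ∈ (P.get i).2, _ ∈ Cell cs) ↔ (∃ cs ∈ (P.get i).2, _ ∈ Cell cs)
  refine exists_congr fun cs => and_congr_right fun hcs => ?_
  show (∀ c ∈ cs, c.holds _) ↔ (∀ c ∈ cs, c.holds _)
  exact forall_congr' fun c => imp_congr_right fun hc =>
    hkey c (mem_allC (List.get_mem P i) hcs hc)

end Germ

section Final
variable {n : ℕ}

lemma iff_of_ite_eq {p q : Prop} [Decidable p] [Decidable q]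
    (h : (if p then true else false) = (if q then true else false)) : p ↔ q := by
  by_cases hp : p <;> by_cases hq : q <;> simp [hp, hq] at h ⊢

def typeJ (x : Fin n → ℝ) : Fin n → Bool :=
  fun j => if Int.fract (x j) = 0 then true else false

def typeZ (P : List (NFpiece n)) (x : Fin n → ℝ) : Fin P.length → (Fin n → Bool) → Bool :=
  fun i S => if (floorv x - intS S) ∈ (P.get i).1 then true else false

def typeC (P : List (NFpiece n)) (x : Fin n → ℝ) :
    Fin (allC P).length → (Fin n → Bool) → Bool × Bool :=
  fun l S =>
    (if dotv ((allC P).get l).a (fracv x + oneS S) + ((allC P).get l).b < 0 then true else false,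
     if dotv ((allC P).get l).a (fracv x + oneS S) + ((allC P).get l).b = 0 then true else false)

def typeT (P : List (NFpiece n)) (x : Fin n → ℝ) :=
  (typeJ x, typeZ P x, typeC P x)

lemma simX_of_type (P : List (NFpiece n)) (x y : Fin n → ℝ)
    (h : typeT P x = typeT P y) : SimX (NFset P) x y := by
  have h1 : typeJ x = typeJ y := congrArg (fun t => t.1) h
  have h2 : typeZ P x = typeZ P y := congrArg (fun t => t.2.1) h
  have h3 : typeC P x = typeC P y := congrArg (fun t => t.2.2) h
  apply simX_of_NF
  · intro j
    exact iff_of_ite_eq (congrFun h1 j)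
  · intro i S
    exact iff_of_ite_eq (congrFun (congrFun h2 i) S)
  · intro c hc S
    obtain ⟨l, hl⟩ := List.mem_iff_get.mp hc
    have h3' := congrFun (congrFun h3 l) S
    subst hl
    exact ⟨iff_of_ite_eq (congrArg Prod.fst h3'), iff_of_ite_eq (congrArg Prod.snd h3')⟩

lemma finite_family {α : Type*} (T : Type*) [Finite T] (τ : (Fin n → ℝ) → T)
    (G : (Fin n → ℝ) → α)
    (hG : ∀ x y, τ x = τ y → G x = G y) : {S : α | ∃ x, S = G x}.Finite := by
  classical
  have heq : {S : α | ∃ x, S = G x} = Set.range G := by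
    ext S; simp [Set.range, eq_comm]
  rw [heq]
  have h2 : Set.range G ⊆ Set.range (fun t : {t : T // ∃ x, τ x = t} => G t.2.choose) := by
    rintro _ ⟨x, rfl⟩
    refine ⟨⟨τ x, ⟨x, rfl⟩⟩, ?_⟩
    exact hG _ _ (Exists.choose_spec (⟨x, rfl⟩ : ∃ x', τ x' = τ x))
  exact (Set.finite_range _).subset h2

lemma simX_refl (X : Set (Fin n → ℝ)) (x : Fin n → ℝ) : SimX X x x :=
  ⟨1, one_pos, fun _ _ => Iff.rfl⟩

lemma simX_symm {X : Set (Fin n → ℝ)} {x y : Fin n → ℝ} (h : SimX X x y) : SimX X y x := by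
  obtain ⟨r, hr, h⟩ := h
  exact ⟨r, hr, fun w hw => (h w hw).symm⟩

lemma simX_trans {X : Set (Fin n → ℝ)} {x y z : Fin n → ℝ}
    (h1 : SimX X x y) (h2 : SimX X y z) : SimX X x z := by
  obtain ⟨r1, hr1, h1⟩ := h1
  obtain ⟨r2, hr2, h2⟩ := h2
  exact ⟨min r1 r2, lt_min hr1 hr2, fun w hw =>
    (h1 w (lt_of_lt_of_le hw (min_le_left _ _))).trans
      (h2 w (lt_of_lt_of_le hw (min_le_right _ _)))⟩

lemma simX_class_eq {X : Set (Fin n → ℝ)} {x y : Fin n → ℝ} (h : SimX X x y) :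
    {z | SimX X x z} = {z | SimX X y z} := by
  ext z
  exact ⟨fun hz => simX_trans (simX_symm h) hz, fun hz => simX_trans h hz⟩

lemma stratum_of_simX {X : Set (Fin n → ℝ)} {x y : Fin n → ℝ} (hsim : SimX X x y)
    {v : Fin n → ℝ} (hv : IsStratum X x v) : IsStratum X y v := by
  obtain ⟨r₀, hr₀, hiff⟩ := hsim
  obtain ⟨r, hr, hstr⟩ := hv
  refine ⟨min r r₀, lt_min hr hr₀, fun y' hy' hline => ?_⟩
  obtain ⟨z, ⟨hzX, hzB⟩, α, hza⟩ := hline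
  rw [Metric.mem_ball, dist_eq_norm] at hy' hzB
  have hy'r : ‖y' - y‖ < r₀ := lt_of_lt_of_le hy' (min_le_right _ _)
  have hzr : ‖z - y‖ < r₀ := lt_of_lt_of_le hzB (min_le_right _ _)
  have hzX' : x + (z - y) ∈ X := by
    rw [hiff (z - y) hzr]
    have : y + (z - y) = z := by abel
    rw [this]
    exact hzX
  have hmain : x + (y' - y) ∈ X := by
    refine hstr (x + (y' - y)) ?_ ⟨x + (z - y), ⟨hzX', ?_⟩, α, ?_⟩
    · rw [Metric.mem_ball, dist_eq_norm]
      have : x + (y' - y) - x = y' - y := by abel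
      rw [this]
      exact lt_of_lt_of_le hy' (min_le_left _ _)
    · rw [Metric.mem_ball, dist_eq_norm]
      have : x + (z - y) - x = z - y := by abel
      rw [this]
      exact lt_of_lt_of_le hzB (min_le_left _ _)
    · rw [hza]
      abel
  rw [hiff (y' - y) hy'r] at hmain
  have : y + (y' - y) = y' := by abel
  rwa [this] at hmain

lemma strata_eq_of_simX {X : Set (Fin n → ℝ)} {x y : Fin n → ℝ} (h : SimX X x y) :
    {v | IsStratum X x v} = {v | IsStratum X y v} := by
  ext v
  exact ⟨fun hv => stratum_of_simX h hv, fun hv => stratum_of_simX (simX_symm h) hv⟩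

theorem main_finite (X : Set (Fin n → ℝ)) (hX : IsNF X) :
    {C : Set (Fin n → ℝ) | ∃ x, C = {y | SimX X x y}}.Finite ∧
    {S : Set (Fin n → ℝ) | ∃ x, S = {v | IsStratum X x v}}.Finite := by
  obtain ⟨P, rfl⟩ := hX
  constructor
  · exact finite_family _ (typeT P) (fun x => {y | SimX (NFset P) x y})
      (fun x y h => simX_class_eq (simX_of_type P x y h))
  · exact finite_family _ (typeT P) (fun x => {v | IsStratum (NFset P) x v})
      (fun x y h => strata_eq_of_simX (simX_of_type P x y h))

end Final

/-- For a `⟨ℝ,+,<,ℤ⟩`-definable set: `∼_X` has finitely many classes, and the family of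
spaces of strata is finite. -/
theorem stmt8 (n : ℕ) (X : Set (Fin n → ℝ)) (hX : LsDefinable X) :
    {C : Set (Fin n → ℝ) | ∃ x, C = {y | SimX X x y}}.Finite ∧
    {S : Set (Fin n → ℝ) | ∃ x, S = {v | IsStratum X x v}}.Finite :=
  main_finite X hX.isNF

end AuxProofDev
end

section
/- If X ⊆ ℝ^n is ⟨ℝ,+,<,1⟩-definable then the set of X-singular points is finite, and every X-singular point has all of its coordinates rational. -/
open FirstOrder

set_option linter.unusedSectionVars false
set_option maxHeartbeats 1000000
namespace Stmt9aux




/-- sign-equivalence of two reals -/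
def sgEq (a b : ℝ) : Prop := (0 < a ↔ 0 < b) ∧ (a < 0 ↔ b < 0)

lemma sgEq_refl (a : ℝ) : sgEq a a := ⟨Iff.rfl, Iff.rfl⟩

lemma sgEq.symm {a b : ℝ} (h : sgEq a b) : sgEq b a := ⟨h.1.symm, h.2.symm⟩

lemma sgEq.trans {a b c : ℝ} (h : sgEq a b) (h' : sgEq b c) : sgEq a c :=
  ⟨h.1.trans h'.1, h.2.trans h'.2⟩

lemma sgEq_of_eq {a b : ℝ} (h : a = b) : sgEq a b := h ▸ sgEq_refl a

lemma sgEq.zero_iff {a b : ℝ} (h : sgEq a b) : a = 0 ↔ b = 0 := by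
  constructor <;> intro h0
  · rcases lt_trichotomy b 0 with hb | hb | hb
    · exact absurd (h.2.2 hb) (by simp [h0])
    · exact hb.symm ▸ rfl
    · exact absurd (h.1.2 hb) (by simp [h0])
  · rcases lt_trichotomy a 0 with ha | ha | ha
    · exact absurd (h.2.1 ha) (by simp [h0])
    · exact ha
    · exact absurd (h.1.1 ha) (by simp [h0])

lemma sgEq_mul_left {q a b : ℝ} (hq : q ≠ 0) (h : sgEq (q * a) (q * b)) : sgEq a b := by
  rcases hq.lt_or_gt with hq' | hq'
  · constructor
    · rw [← neg_pos (a := q)] at hq'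
      constructor <;> intro hh
      · have := h.2.1 (by nlinarith)
        nlinarith
      · have := h.2.2 (by nlinarith)
        nlinarith
    · constructor <;> intro hh
      · have := h.1.1 (by nlinarith)
        nlinarith
      · have := h.1.2 (by nlinarith)
        nlinarith
  · constructor
    · constructor <;> intro hh
      · have := h.1.1 (by nlinarith)
        nlinarith
      · have := h.1.2 (by nlinarith)
        nlinarith
    · constructor <;> intro hh
      · have := h.2.1 (by nlinarith)
        nlinarith
      · have := h.2.2 (by nlinarith)
        nlinarith

variable {ι : Type} [Fintype ι] [DecidableEq ι]

/-- evaluation of a rational affine functional -/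
def aeval (A : (ι → ℚ) × ℚ) (x : ι → ℝ) : ℝ := ∑ i, (A.1 i : ℝ) * x i + (A.2 : ℝ)

lemma aeval_sub (A B : (ι → ℚ) × ℚ) (x : ι → ℝ) :
    aeval (A - B) x = aeval A x - aeval B x := by
  simp only [aeval, Prod.fst_sub, Prod.snd_sub, Pi.sub_apply]
  push_cast
  simp only [sub_mul]
  rw [Finset.sum_sub_distrib]
  ring

lemma aeval_smul (q : ℚ) (A : (ι → ℚ) × ℚ) (x : ι → ℝ) :
    aeval (q • A) x = (q : ℝ) * aeval A x := by
  simp only [aeval, Prod.smul_fst, Prod.smul_snd, Pi.smul_apply, smul_eq_mul]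
  push_cast
  rw [mul_add, Finset.mul_sum]
  congr 1
  apply Finset.sum_congr rfl
  intro i _
  ring

/-- `X` is determined by the signs of the functionals in `H` -/
def Determined (H : Finset ((ι → ℚ) × ℚ)) (X : Set (ι → ℝ)) : Prop :=
  ∀ x y, (∀ A ∈ H, sgEq (aeval A x) (aeval A y)) → (x ∈ X ↔ y ∈ X)

def Semilinear (X : Set (ι → ℝ)) : Prop := ∃ H, Determined H X

lemma Determined.mono {H H' : Finset ((ι → ℚ) × ℚ)} {X : Set (ι → ℝ)}
    (h : Determined H X) (hs : H ⊆ H') : Determined H' X :=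
  fun x y hxy => h x y fun A hA => hxy A (hs hA)

lemma Semilinear.compl {X : Set (ι → ℝ)} (h : Semilinear X) : Semilinear Xᶜ := by
  obtain ⟨H, hH⟩ := h
  exact ⟨H, fun x y hxy => not_iff_not.2 (hH x y hxy)⟩

lemma Semilinear.himp {X Y : Set (ι → ℝ)} (hX : Semilinear X) (hY : Semilinear Y) :
    Semilinear {p | p ∈ X → p ∈ Y} := by
  obtain ⟨H₁, h₁⟩ := hX
  obtain ⟨H₂, h₂⟩ := hY
  refine ⟨H₁ ∪ H₂, fun x y hxy => ?_⟩
  have e₁ := h₁ x y fun A hA => hxy A (Finset.mem_union_left _ hA)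
  have e₂ := h₂ x y fun A hA => hxy A (Finset.mem_union_right _ hA)
  simp only [Set.mem_setOf_eq]
  rw [e₁, e₂]

lemma semilinear_empty : Semilinear (∅ : Set (ι → ℝ)) :=
  ⟨∅, fun _ _ _ => Iff.rfl⟩

lemma Semilinear.congr {X Y : Set (ι → ℝ)} (h : Semilinear X) (e : X = Y) : Semilinear Y := e ▸ h


section Matching
variable {β : Type*}

lemma exists_matching_point (F : Finset β) (θ θ' : β → ℝ) (t : ℝ)
    (hlt : ∀ A ∈ F, ∀ B ∈ F, (θ A < θ B ↔ θ' A < θ' B)) :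
    ∃ t', ∀ A ∈ F, sgEq (t' - θ' A) (t - θ A) := by
  classical
  by_cases hex : ∃ A ∈ F, θ A = t
  · obtain ⟨A₀, hA₀, hA₀t⟩ := hex
    refine ⟨θ' A₀, fun B hB => ?_⟩
    constructor
    · rw [sub_pos, sub_pos, ← hA₀t]
      exact (hlt B hB A₀ hA₀).symm
    · rw [sub_neg, sub_neg, ← hA₀t]
      exact (hlt A₀ hA₀ B hB).symm
  · push_neg at hex
    set D := F.filter (fun A => θ A < t) with hD
    set U := F.filter (fun A => t < θ A) with hU
    have hDU : ∀ B ∈ F, B ∈ D ∨ B ∈ U := by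
      intro B hB
      rcases lt_trichotomy (θ B) t with h | h | h
      · exact Or.inl (Finset.mem_filter.2 ⟨hB, h⟩)
      · exact absurd h (hex B hB)
      · exact Or.inr (Finset.mem_filter.2 ⟨hB, h⟩)
    have main : ∀ t', (∀ B ∈ D, θ' B < t') → (∀ B ∈ U, t' < θ' B) →
        ∀ A ∈ F, sgEq (t' - θ' A) (t - θ A) := by
      intro t' hd hu A hA
      rcases hDU A hA with h | h
      · have h1 : θ A < t := (Finset.mem_filter.1 h).2
        have h2 : θ' A < t' := hd A h
        exact ⟨iff_of_true (by linarith) (by linarith),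
          iff_of_false (by linarith) (by linarith)⟩
      · have h1 : t < θ A := (Finset.mem_filter.1 h).2
        have h2 : t' < θ' A := hu A h
        exact ⟨iff_of_false (by linarith) (by linarith),
          iff_of_true (by linarith) (by linarith)⟩
    by_cases hDne : D.Nonempty <;> by_cases hUne : U.Nonempty
    · obtain ⟨A₀, hA₀, hA₀max⟩ := D.exists_max_image θ' hDne
      obtain ⟨B₀, hB₀, hB₀min⟩ := U.exists_min_image θ' hUne
      have hA₀F : A₀ ∈ F := (Finset.mem_filter.1 hA₀).1
      have hB₀F : B₀ ∈ F := (Finset.mem_filter.1 hB₀).1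
      have hord : θ' A₀ < θ' B₀ := by
        refine (hlt A₀ hA₀F B₀ hB₀F).1 ?_
        have := (Finset.mem_filter.1 hA₀).2
        have := (Finset.mem_filter.1 hB₀).2
        linarith
      refine ⟨(θ' A₀ + θ' B₀) / 2, main _ ?_ ?_⟩
      · intro B hB
        have := hA₀max B hB
        linarith
      · intro B hB
        have := hB₀min B hB
        linarith
    · obtain ⟨A₀, hA₀, hA₀max⟩ := D.exists_max_image θ' hDne
      refine ⟨θ' A₀ + 1, main _ ?_ ?_⟩
      · intro B hB
        have := hA₀max B hB
        linarith
      · intro B hB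
        exact absurd ⟨B, hB⟩ hUne
    · obtain ⟨B₀, hB₀, hB₀min⟩ := U.exists_min_image θ' hUne
      refine ⟨θ' B₀ - 1, main _ ?_ ?_⟩
      · intro B hB
        exact absurd ⟨B, hB⟩ hDne
      · intro B hB
        have := hB₀min B hB
        linarith
    · refine ⟨0, main _ ?_ ?_⟩
      · intro B hB
        exact absurd ⟨B, hB⟩ hDne
      · intro B hB
        exact absurd ⟨B, hB⟩ hUne

end Matching

section Proj
variable {ι : Type} [Fintype ι] [DecidableEq ι]

def restr (A : ((ι ⊕ Unit) → ℚ) × ℚ) : (ι → ℚ) × ℚ := (A.1 ∘ Sum.inl, A.2)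

lemma aeval_elim (A : ((ι ⊕ Unit) → ℚ) × ℚ) (p : ι → ℝ) (t : ℝ) :
    aeval A (Sum.elim p fun _ => t) = aeval (restr A) p + (A.1 (Sum.inr ()) : ℝ) * t := by
  simp only [aeval, restr, Fintype.sum_sum_type, Sum.elim_inl, Sum.elim_inr,
    Function.comp_apply, Finset.univ_unique, Finset.sum_singleton]
  ring

lemma determined_normalized {H : Finset (((ι ⊕ Unit) → ℚ) × ℚ)} {X : Set ((ι ⊕ Unit) → ℝ)}
    (h : Determined H X) :
    ∃ H', Determined H' X ∧ ∀ A ∈ H', A.1 (Sum.inr ()) = 0 ∨ A.1 (Sum.inr ()) = 1 := by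
  classical
  set N : (((ι ⊕ Unit) → ℚ) × ℚ) → (((ι ⊕ Unit) → ℚ) × ℚ) :=
    fun A => if A.1 (Sum.inr ()) = 0 then A else (A.1 (Sum.inr ()))⁻¹ • A with hN
  refine ⟨H.image N, ?_, ?_⟩
  · intro x y hxy
    apply h x y
    intro A hA
    have hmem := hxy (N A) (Finset.mem_image_of_mem N hA)
    by_cases hb : A.1 (Sum.inr ()) = 0
    · simpa [hN, hb] using hmem
    · rw [hN] at hmem
      simp only [if_neg hb] at hmem
      rw [aeval_smul, aeval_smul] at hmem
      exact sgEq_mul_left (by exact_mod_cast inv_ne_zero hb) hmem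
  · intro A' hA'
    obtain ⟨A, hA, rfl⟩ := Finset.mem_image.1 hA'
    by_cases hb : A.1 (Sum.inr ()) = 0
    · left
      simp [hN, hb]
    · right
      simp only [hN, if_neg hb, Prod.smul_fst, Pi.smul_apply, smul_eq_mul]
      exact inv_mul_cancel₀ hb

lemma Semilinear.proj {X : Set ((ι ⊕ Unit) → ℝ)} (hX : Semilinear X) :
    Semilinear {p : ι → ℝ | ∃ t : ℝ, Sum.elim p (fun _ => t) ∈ X} := by
  classical
  obtain ⟨H₀, hH₀⟩ := hX
  obtain ⟨H, hH, hnorm⟩ := determined_normalized hH₀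
  refine ⟨H.image restr ∪ (H ×ˢ H).image (fun AB => restr AB.1 - restr AB.2), ?_⟩
  have key : ∀ p p' : ι → ℝ,
      (∀ A ∈ H, sgEq (aeval (restr A) p) (aeval (restr A) p')) →
      (∀ A ∈ H, ∀ B ∈ H, sgEq (aeval (restr A) p - aeval (restr B) p)
        (aeval (restr A) p' - aeval (restr B) p')) →
      (∃ t, Sum.elim p (fun _ => t) ∈ X) → (∃ t, Sum.elim p' (fun _ => t) ∈ X) := by
    intro p p' h1 h2 ht
    obtain ⟨t, ht⟩ := ht
    set F := H.filter (fun A => A.1 (Sum.inr ()) = 1) with hF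
    have hlt : ∀ A ∈ F, ∀ B ∈ F,
        ((fun A => -(aeval (restr A) p)) A < (fun A => -(aeval (restr A) p)) B ↔
         (fun A => -(aeval (restr A) p')) A < (fun A => -(aeval (restr A) p')) B) := by
      intro A hA B hB
      have hA' := (Finset.mem_filter.1 hA).1
      have hB' := (Finset.mem_filter.1 hB).1
      simp only
      constructor <;> intro hh
      · have h0 : 0 < aeval (restr A) p - aeval (restr B) p := by linarith
        have := (h2 A hA' B hB').1.1 h0
        linarith
      · have h0 : 0 < aeval (restr A) p' - aeval (restr B) p' := by linarith
        have := (h2 A hA' B hB').1.2 h0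
        linarith
    obtain ⟨t', ht'⟩ := exists_matching_point F (fun A => -(aeval (restr A) p))
      (fun A => -(aeval (restr A) p')) t hlt
    refine ⟨t', (hH (Sum.elim p' fun _ => t') (Sum.elim p fun _ => t) ?_).mpr ht⟩
    intro A hA
    rw [aeval_elim, aeval_elim]
    rcases hnorm A hA with hb | hb
    · rw [hb]
      simpa using (h1 A hA).symm
    · rw [hb]
      push_cast
      rw [one_mul, one_mul]
      have hm := ht' A (Finset.mem_filter.2 ⟨hA, hb⟩)
      exact (sgEq_of_eq (by ring)).trans (hm.trans (sgEq_of_eq (by ring)))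
  intro p p' hsigns
  have h1 : ∀ A ∈ H, sgEq (aeval (restr A) p) (aeval (restr A) p') := fun A hA =>
    hsigns _ (Finset.mem_union_left _ (Finset.mem_image_of_mem _ hA))
  have h2 : ∀ A ∈ H, ∀ B ∈ H, sgEq (aeval (restr A) p - aeval (restr B) p)
      (aeval (restr A) p' - aeval (restr B) p') := by
    intro A hA B hB
    have := hsigns (restr A - restr B) (Finset.mem_union_right _
      (Finset.mem_image.2 ⟨(A, B), Finset.mem_product.2 ⟨hA, hB⟩, rfl⟩))
    rwa [aeval_sub, aeval_sub] at this
  constructor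
  · exact fun h => key p p' h1 h2 h
  · exact fun h => key p' p (fun A hA => (h1 A hA).symm)
      (fun A hA B hB => (h2 A hA B hB).symm) h

end Proj

section Relabel
variable {κ ι : Type} [Fintype κ] [DecidableEq κ] [Fintype ι] [DecidableEq ι]

lemma Semilinear.relabel {X : Set (κ → ℝ)} (hX : Semilinear X) (m : κ → ι) :
    Semilinear {v : ι → ℝ | v ∘ m ∈ X} := by
  classical
  obtain ⟨H, hH⟩ := hX
  set P : ((κ → ℚ) × ℚ) → ((ι → ℚ) × ℚ) :=
    fun A => (fun i => ∑ j ∈ Finset.univ.filter (fun j => m j = i), A.1 j, A.2) with hP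
  have hkey : ∀ (A : (κ → ℚ) × ℚ) (v : ι → ℝ), aeval (P A) v = aeval A (v ∘ m) := by
    intro A v
    simp only [aeval, hP, Function.comp_apply]
    congr 1
    rw [← Finset.sum_fiberwise Finset.univ m (fun j => (A.1 j : ℝ) * v (m j))]
    apply Finset.sum_congr rfl
    intro i _
    push_cast
    rw [Finset.sum_mul]
    apply Finset.sum_congr rfl
    intro j hj
    rw [(Finset.mem_filter.1 hj).2]
  refine ⟨H.image P, fun x y hxy => ?_⟩
  exact hH (x ∘ m) (y ∘ m) fun A hA => by
    have := hxy (P A) (Finset.mem_image_of_mem P hA)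
    rwa [hkey, hkey] at this

end Relabel

lemma aeval_add {ι : Type} [Fintype ι] (A B : (ι → ℚ) × ℚ) (x : ι → ℝ) :
    aeval (A + B) x = aeval A x + aeval B x := by
  simp only [aeval, Prod.fst_add, Prod.snd_add, Pi.add_apply]
  push_cast
  simp only [add_mul]
  rw [Finset.sum_add_distrib]
  ring

section MT
open FirstOrder Language

variable {α : Type} [Fintype α] [DecidableEq α]

lemma term_affine (t : SsLang.Term α) :
    ∃ A : (α → ℚ) × ℚ, ∀ v : α → ℝ, t.realize v = aeval A v := by
  classical
  induction t with
  | var i =>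
      refine ⟨(Pi.single i 1, 0), fun v => ?_⟩
      simp only [Term.realize_var, aeval]
      rw [Finset.sum_eq_single i]
      · simp
      · intro j _ hj
        simp [Pi.single_apply, hj]
      · simp
  | func f ts ih =>
      rename_i l
      match l, f with
      | 0, f =>
          refine ⟨(0, 1), fun v => ?_⟩
          rw [Term.realize_func]
          show (1 : ℝ) = aeval (0, 1) v
          simp [aeval]
      | 1, f => exact (show Empty from f).elim
      | 2, f =>
          obtain ⟨A₀, h₀⟩ := ih 0
          obtain ⟨A₁, h₁⟩ := ih 1
          refine ⟨A₀ + A₁, fun v => ?_⟩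
          rw [Term.realize_func]
          show Term.realize v (ts 0) + Term.realize v (ts 1) = aeval (A₀ + A₁) v
          rw [h₀ , h₁, aeval_add]
      | (l + 3), f => exact (show Empty from f).elim

lemma formula_semilinear {k : ℕ} (φ : SsLang.BoundedFormula α k) :
    Semilinear {p : α ⊕ Fin k → ℝ | φ.Realize (p ∘ Sum.inl) (p ∘ Sum.inr)} := by
  classical
  induction φ with
  | falsum =>
      refine semilinear_empty.congr ?_
      ext p
      simp only [Set.mem_empty_iff_false, Set.mem_setOf_eq, false_iff]
      exact fun h => h
  | equal t₁ t₂ =>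
      obtain ⟨A₁, h₁⟩ := term_affine t₁
      obtain ⟨A₂, h₂⟩ := term_affine t₂
      refine ⟨{A₁ - A₂}, fun x y hxy => ?_⟩
      have h := (hxy _ (Finset.mem_singleton_self _)).zero_iff
      rw [aeval_sub, aeval_sub, sub_eq_zero, sub_eq_zero] at h
      simp only [Set.mem_setOf_eq]
      show Term.realize (Sum.elim (x ∘ Sum.inl) (x ∘ Sum.inr)) t₁ =
          Term.realize (Sum.elim (x ∘ Sum.inl) (x ∘ Sum.inr)) t₂ ↔
        Term.realize (Sum.elim (y ∘ Sum.inl) (y ∘ Sum.inr)) t₁ =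
          Term.realize (Sum.elim (y ∘ Sum.inl) (y ∘ Sum.inr)) t₂
      rw [Sum.elim_comp_inl_inr, Sum.elim_comp_inl_inr, h₁, h₂, h₁, h₂]
      exact h
  | rel R ts =>
      rename_i l
      match l, R with
      | 0, R => exact (show Empty from R).elim
      | 1, R => exact (show Empty from R).elim
      | 2, R =>
          obtain ⟨A₁, h₁⟩ := term_affine (ts 0)
          obtain ⟨A₂, h₂⟩ := term_affine (ts 1)
          refine ⟨{A₁ - A₂}, fun x y hxy => ?_⟩
          have h := (hxy _ (Finset.mem_singleton_self _)).2
          rw [aeval_sub, aeval_sub, sub_neg, sub_neg] at h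
          simp only [Set.mem_setOf_eq]
          show Term.realize (Sum.elim (x ∘ Sum.inl) (x ∘ Sum.inr)) (ts 0) <
              Term.realize (Sum.elim (x ∘ Sum.inl) (x ∘ Sum.inr)) (ts 1) ↔
            Term.realize (Sum.elim (y ∘ Sum.inl) (y ∘ Sum.inr)) (ts 0) <
              Term.realize (Sum.elim (y ∘ Sum.inl) (y ∘ Sum.inr)) (ts 1)
          rw [Sum.elim_comp_inl_inr, Sum.elim_comp_inl_inr, h₁, h₂, h₁, h₂]
          exact h
      | (l + 3), R => exact (show Empty from R).elim
  | imp φ ψ ihφ ihψ =>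
      refine (ihφ.himp ihψ).congr ?_
      ext p
      simp [BoundedFormula.realize_imp]
  | all φ ihφ =>
      rename_i k'
      set m : α ⊕ Fin (k' + 1) → (α ⊕ Fin k') ⊕ Unit :=
        Sum.elim (Sum.inl ∘ Sum.inl) (Fin.lastCases (Sum.inr ()) (Sum.inl ∘ Sum.inr)) with hm
      have hS' := ihφ.relabel m
      have hZ := (hS'.compl).proj
      refine hZ.compl.congr ?_
      have hcomp : ∀ (p : (α ⊕ Fin k') → ℝ) (t : ℝ),
          (Sum.elim p (fun _ => t)) ∘ m = Sum.elim (p ∘ Sum.inl) (Fin.snoc (p ∘ Sum.inr) t) := by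
        intro p t
        funext i
        rcases i with a | j
        · simp [hm]
        · refine Fin.lastCases ?_ ?_ j
          · simp [hm]
          · intro j'
            simp [hm]
      ext p
      simp only [Set.mem_compl_iff, Set.mem_setOf_eq, not_exists, not_not,
        BoundedFormula.realize_all, hcomp, Sum.elim_comp_inl, Sum.elim_comp_inr]
end MT

open FirstOrder Language in
lemma semilinear_of_definable {n : ℕ} {X : Set (Fin n → ℝ)}
    (hX : Set.Definable (∅ : Set ℝ) SsLang X) : Semilinear X := by
  rw [Set.definable_iff_exists_formula_sum] at hX
  obtain ⟨φ, rfl⟩ := hX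
  haveI : DecidableEq (↥(∅ : Set ℝ)) := fun a => isEmptyElim a
  haveI : Fintype (↥(∅ : Set ℝ)) := Fintype.ofIsEmpty
  have h := formula_semilinear (α := ↥(∅ : Set ℝ) ⊕ Fin n) (k := 0) φ
  have h2 := h.relabel
    (Sum.elim (Sum.elim (fun e => isEmptyElim e) id) Fin.elim0 :
      ((↥(∅ : Set ℝ) ⊕ Fin n) ⊕ Fin 0) → Fin n)
  refine h2.congr ?_
  ext v
  simp only [Set.mem_setOf_eq]
  have e1 : (v ∘ (Sum.elim (Sum.elim (fun e => isEmptyElim e) id) Fin.elim0 :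
      ((↥(∅ : Set ℝ) ⊕ Fin n) ⊕ Fin 0) → Fin n)) ∘ Sum.inl = Sum.elim Subtype.val v := by
    funext x
    rcases x with e | i
    · exact isEmptyElim e
    · rfl
  rw [e1]
  rw [Subsingleton.elim ((v ∘ (Sum.elim (Sum.elim (fun e => isEmptyElim e) id) Fin.elim0 :
      ((↥(∅ : Set ℝ) ⊕ Fin n) ⊕ Fin 0) → Fin n)) ∘ Sum.inr) default]
  rw [Formula.Realize]
  exact iff_of_eq (congrArg (BoundedFormula.Realize φ (Sum.elim Subtype.val v))
    (Subsingleton.elim _ _))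

section Geometry
variable {n : ℕ}

def lin (a : Fin n → ℚ) (v : Fin n → ℝ) : ℝ := ∑ i, (a i : ℝ) * v i

lemma aeval_eq_lin (A : (Fin n → ℚ) × ℚ) (x : Fin n → ℝ) :
    aeval A x = lin A.1 x + (A.2 : ℝ) := rfl

lemma lin_sub (a : Fin n → ℚ) (x y : Fin n → ℝ) : lin a (x - y) = lin a x - lin a y := by
  simp only [lin, Pi.sub_apply, mul_sub]
  rw [Finset.sum_sub_distrib]

lemma aeval_add_smul (A : (Fin n → ℚ) × ℚ) (z v : Fin n → ℝ) (α : ℝ) :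
    aeval A (z + α • v) = aeval A z + α * lin A.1 v := by
  simp only [aeval, lin, Pi.add_apply, Pi.smul_apply, smul_eq_mul, mul_add]
  rw [Finset.sum_add_distrib, Finset.mul_sum]
  have h : ∀ i ∈ Finset.univ, (A.1 i : ℝ) * (α * v i) = α * ((A.1 i : ℝ) * v i) :=
    fun i _ => by ring
  rw [Finset.sum_congr rfl h]
  ring

lemma continuous_aeval (A : (Fin n → ℚ) × ℚ) : Continuous (aeval A) :=
  (continuous_finset_sum _ fun i _ => continuous_const.mul (continuous_apply i)).add
    continuous_const

lemma isStratum_of_kernel {H : Finset ((Fin n → ℚ) × ℚ)} {X : Set (Fin n → ℝ)}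
    (hdet : Determined H X) (x v : Fin n → ℝ)
    (hv : ∀ A ∈ H, aeval A x = 0 → lin A.1 v = 0) : IsStratum X x v := by
  classical
  have hev : ∀ᶠ y in nhds x, ∀ A ∈ H, aeval A x ≠ 0 → sgEq (aeval A y) (aeval A x) := by
    rw [Filter.eventually_all_finset]
    intro A hA
    by_cases h0 : aeval A x = 0
    · filter_upwards with y h
      exact absurd h0 h
    · rcases (lt_or_gt_of_ne h0) with hneg | hpos
      · have hopen : IsOpen {y : Fin n → ℝ | aeval A y < 0} :=
          isOpen_lt (continuous_aeval A) continuous_const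
        filter_upwards [hopen.mem_nhds hneg] with y hy _
        exact ⟨iff_of_false (lt_asymm hy) (lt_asymm hneg), iff_of_true hy hneg⟩
      · have hopen : IsOpen {y : Fin n → ℝ | 0 < aeval A y} :=
          isOpen_lt continuous_const (continuous_aeval A)
        filter_upwards [hopen.mem_nhds hpos] with y hy _
        exact ⟨iff_of_true hy hpos, iff_of_false (lt_asymm hy) (lt_asymm hpos)⟩
  rw [Metric.eventually_nhds_iff_ball] at hev
  obtain ⟨r, hr, hball⟩ := hev
  refine ⟨r, hr, ?_⟩
  rintro y hy ⟨z, ⟨hzX, hzb⟩, α, rfl⟩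
  refine (hdet (z + α • v) z ?_).mpr hzX
  intro A hA
  by_cases h0 : aeval A x = 0
  · rw [aeval_add_smul, hv A hA h0, mul_zero, add_zero]
    exact sgEq_refl _
  · exact (hball _ hy A hA h0).trans (hball _ hzb A hA h0).symm

lemma singular_kernel {H : Finset ((Fin n → ℚ) × ℚ)} {X : Set (Fin n → ℝ)}
    (hdet : Determined H X) (x : Fin n → ℝ) (hx : IsSingular X x) :
    ∀ v : Fin n → ℝ, (∀ A ∈ H, aeval A x = 0 → lin A.1 v = 0) → v = 0 :=
  fun v hv => hx v (isStratum_of_kernel hdet x v hv)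

lemma rat_sum {β : Type*} (s : Finset β) (f : β → ℝ) (h : ∀ b ∈ s, ∃ q : ℚ, f b = q) :
    ∃ q : ℚ, ∑ b ∈ s, f b = q := by
  classical
  induction s using Finset.induction with
  | empty => exact ⟨0, by simp⟩
  | insert a s' ha ih =>
      obtain ⟨q₁, hq₁⟩ := h a (Finset.mem_insert_self a s')
      obtain ⟨q₂, hq₂⟩ := ih fun b hb => h b (Finset.mem_insert_of_mem hb)
      refine ⟨q₁ + q₂, ?_⟩
      rw [Finset.sum_insert ha, hq₁, hq₂]
      push_cast
      ring

lemma singular_rat {H : Finset ((Fin n → ℚ) × ℚ)} {X : Set (Fin n → ℝ)}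
    (hdet : Determined H X) (x : Fin n → ℝ) (hx : IsSingular X x) (i : Fin n) :
    ∃ q : ℚ, x i = (q : ℝ) := by
  classical
  set ei : Fin n → ℚ := fun j => if i = j then 1 else 0 with hei
  set s : Finset (Fin n → ℚ) := (H.filter (fun A => aeval A x = 0)).image Prod.fst with hs
  have hmem : ei ∈ Submodule.span ℚ (↑s : Set (Fin n → ℚ)) := by
    by_contra hni
    obtain ⟨ψ, hψ0, hψmap⟩ := Submodule.exists_dual_map_eq_bot_of_notMem hni inferInstance
    set w : Fin n → ℚ := fun j => ψ (fun j' => if j = j' then 1 else 0) with hw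
    have hψeval : ∀ y : Fin n → ℚ, ψ y = ∑ j, y j * w j := by
      intro y
      conv_lhs => rw [pi_eq_sum_univ y]
      rw [map_sum]
      apply Finset.sum_congr rfl
      intro j _
      rw [map_smul, smul_eq_mul]
    have hker : ∀ a ∈ s, ψ a = 0 := by
      intro a ha
      have : ψ a ∈ Submodule.map ψ (Submodule.span ℚ (↑s : Set (Fin n → ℚ))) :=
        Submodule.mem_map_of_mem (Submodule.subset_span ha)
      rw [hψmap, Submodule.mem_bot] at this
      exact this
    have hwreal : (fun j => (w j : ℝ)) = 0 := by
      apply singular_kernel hdet x hx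
      intro A hA h0
      have hAs : A.1 ∈ s := Finset.mem_image_of_mem _ (Finset.mem_filter.2 ⟨hA, h0⟩)
      have h1 : ∑ j, A.1 j * w j = 0 := by
        have := hker _ hAs
        rwa [hψeval] at this
      have : lin A.1 (fun j => (w j : ℝ)) = ((∑ j, A.1 j * w j : ℚ) : ℝ) := by
        rw [lin]
        push_cast
        rfl
      rw [this, h1]
      simp
    have hwi : w i = 0 := by
      have := congrFun hwreal i
      simpa using this
    apply hψ0
    have : ψ ei = w i := by rw [hw, hei]
    rw [this, hwi]
  rw [Submodule.mem_span_finset] at hmem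
  obtain ⟨g, -, hg⟩ := hmem
  have hxi : x i = ∑ a ∈ s, (g a : ℝ) * lin a x := by
    have h1 : ∀ j, ((ei j : ℚ) : ℝ) = ∑ a ∈ s, (g a : ℝ) * (a j : ℝ) := by
      intro j
      have := congrFun hg j
      rw [Finset.sum_apply] at this
      simp only [Pi.smul_apply, smul_eq_mul] at this
      rw [← this]
      push_cast
      rfl
    calc x i = ∑ j, ((ei j : ℚ) : ℝ) * x j := by
          rw [Finset.sum_eq_single i]
          · simp [hei]
          · intro j _ hj
            simp [hei, Ne.symm hj]
          · intro h
            exact absurd (Finset.mem_univ i) h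
      _ = ∑ j, (∑ a ∈ s, (g a : ℝ) * (a j : ℝ)) * x j := by
          apply Finset.sum_congr rfl
          intro j _
          rw [h1]
      _ = ∑ j, ∑ a ∈ s, (g a : ℝ) * (a j : ℝ) * x j := by
          apply Finset.sum_congr rfl
          intro j _
          rw [Finset.sum_mul]
      _ = ∑ a ∈ s, ∑ j, (g a : ℝ) * (a j : ℝ) * x j := Finset.sum_comm
      _ = ∑ a ∈ s, (g a : ℝ) * lin a x := by
          apply Finset.sum_congr rfl
          intro a _
          rw [lin, Finset.mul_sum]
          apply Finset.sum_congr rfl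
          intro j _
          ring
  rw [hxi]
  apply rat_sum
  intro a ha
  obtain ⟨A, hAf, rfl⟩ := Finset.mem_image.1 ha
  have hA0 : aeval A x = 0 := (Finset.mem_filter.1 hAf).2
  have : lin A.1 x = -(A.2 : ℝ) := by
    rw [aeval_eq_lin] at hA0
    linarith
  exact ⟨g A.1 * (-A.2), by rw [this]; push_cast; ring⟩

lemma singular_finite {H : Finset ((Fin n → ℚ) × ℚ)} {X : Set (Fin n → ℝ)}
    (hdet : Determined H X) : {x | IsSingular X x}.Finite := by
  classical
  have hsub : {x | IsSingular X x} ⊆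
      ⋃ S ∈ H.powerset, {x | IsSingular X x ∧ H.filter (fun A => aeval A x = 0) = S} := by
    intro x hx
    simp only [Set.mem_iUnion]
    exact ⟨H.filter (fun A => aeval A x = 0),
      Finset.mem_powerset.2 (Finset.filter_subset _ _), hx, rfl⟩
  refine Set.Finite.subset (Set.Finite.biUnion (H.powerset).finite_toSet ?_) hsub
  intro S _
  apply Set.Subsingleton.finite
  rintro x ⟨hxs, hxS⟩ y ⟨hys, hyS⟩
  have h0 : y - x = 0 := by
    apply singular_kernel hdet x hxs
    intro A hA h0
    have hAS : A ∈ S := hxS ▸ Finset.mem_filter.2 ⟨hA, h0⟩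
    rw [← hyS] at hAS
    have h0y : aeval A y = 0 := (Finset.mem_filter.1 hAS).2
    rw [lin_sub]
    rw [aeval_eq_lin] at h0 h0y
    linarith
  exact (sub_eq_zero.mp h0).symm

end Geometry

end Stmt9aux

/-- A `⟨ℝ,+,<,1⟩`-definable set has finitely many singular points, all with rational
coordinates. -/
theorem stmt9 (n : ℕ) (X : Set (Fin n → ℝ)) (hX : SsDefinable X) :
    {x | IsSingular X x}.Finite ∧
    ∀ x : Fin n → ℝ, IsSingular X x → ∀ i, ∃ q : ℚ, x i = (q : ℝ) := by
  obtain ⟨H, hdet⟩ := Stmt9aux.semilinear_of_definable hX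
  exact ⟨Stmt9aux.singular_finite hdet, fun x hx i => Stmt9aux.singular_rat hdet x hx i⟩
end

section
/- If X ⊆ ℝ^n is ⟨ℝ,+,<,ℤ⟩-definable then the set of X-singular points is countable, and every X-singular point has all of its coordinates rational. -/
open FirstOrder

open Language Filter

namespace Stmt10Aux

noncomputable def U : Ultrafilter ℕ := hyperfilter ℕ

lemma mem_U_of_eventually {s : Set ℕ} (h : ∀ᶠ k in atTop, k ∈ s) : s ∈ U := by
  have : s ∈ (cofinite : Filter ℕ) := by rwa [Nat.cofinite_eq_atTop]
  exact hyperfilter_le_cofinite this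

/-- a sequence is U-small -/
def Small (a : ℕ → ℝ) : Prop := ∀ ε > (0:ℝ), {k | |a k| < ε} ∈ U

/-- a sequence is U-often arbitrarily close to ℤ -/
def Crit (V : ℕ → ℝ) : Prop := ∀ ε > (0:ℝ), {k | ∃ z : ℤ, |V k - z| < ε} ∈ U

lemma small_of_tendsto {a : ℕ → ℝ} (h : Filter.Tendsto a atTop (nhds 0)) : Small a := by
  intro ε hε
  refine mem_U_of_eventually ?_
  have := (Metric.tendsto_atTop.1 h) ε hε
  obtain ⟨N, hN⟩ := this
  filter_upwards [eventually_ge_atTop N] with k hk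
  simpa [Real.dist_eq] using hN k hk

lemma small_mul_const {a : ℕ → ℝ} (ha : Small a) (C : ℝ) : Small (fun k => a k * C) := by
  intro ε hε
  have h1 : (0:ℝ) < ε / (|C| + 1) := by positivity
  refine (U : Filter ℕ).mem_of_superset (ha _ h1) ?_
  intro k hk
  simp only [Set.mem_setOf_eq] at hk ⊢
  have hC : |C| < |C| + 1 := by linarith
  calc |a k * C| = |a k| * |C| := abs_mul _ _
    _ ≤ |a k| * (|C| + 1) := by nlinarith [abs_nonneg (a k), abs_nonneg C]
    _ < (ε / (|C| + 1)) * (|C| + 1) := by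
        have : (0:ℝ) < |C| + 1 := by positivity
        exact mul_lt_mul_of_pos_right hk this
    _ = ε := by field_simp

lemma small_neg {a : ℕ → ℝ} (ha : Small a) : Small (fun k => -a k) := by
  intro ε hε; simpa using ha ε hε

lemma crit_congr_small {V W : ℕ → ℝ} (hV : Crit V) (h : Small (fun k => W k - V k)) :
    Crit W := by
  intro ε hε
  have h1 := hV (ε/2) (by positivity)
  have h2 := h (ε/2) (by positivity)
  refine (U : Filter ℕ).mem_of_superset ((U : Filter ℕ).inter_mem h1 h2) ?_
  rintro k ⟨⟨z, hz⟩, hk⟩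
  refine ⟨z, ?_⟩
  simp only [Set.mem_setOf_eq] at hk
  have : W k - z = (W k - V k) + (V k - z) := by ring
  rw [this]
  calc |(W k - V k) + (V k - z)| ≤ |W k - V k| + |V k - z| := abs_add_le _ _
    _ < ε/2 + ε/2 := by linarith
    _ = ε := by ring

lemma crit_combo {V W : ℕ → ℝ} (hV : Crit V) (hW : Crit W) (p q : ℤ) :
    Crit (fun k => p * V k + q * W k) := by
  intro ε hε
  set M : ℝ := |(p:ℝ)| + |(q:ℝ)| + 1 with hM
  have hM0 : (0:ℝ) < M := by positivity
  have h1 := hV (ε/M) (by positivity)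
  have h2 := hW (ε/M) (by positivity)
  refine (U : Filter ℕ).mem_of_superset ((U : Filter ℕ).inter_mem h1 h2) ?_
  rintro k ⟨⟨z, hz⟩, ⟨w, hw⟩⟩
  refine ⟨p * z + q * w, ?_⟩
  simp only [Set.mem_setOf_eq] at hz hw ⊢
  push_cast
  have : (p:ℝ) * V k + q * W k - (p * z + q * w) = p * (V k - z) + q * (W k - w) := by ring
  rw [this]
  calc |(p:ℝ) * (V k - z) + q * (W k - w)| ≤ |(p:ℝ)| * |V k - z| + |(q:ℝ)| * |W k - w| := by
        refine (abs_add_le _ _).trans ?_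
        simp [abs_mul]
    _ < M * (ε/M) := by
        have hp : |(p:ℝ)| * |V k - z| ≤ |(p:ℝ)| * (ε/M) := by
          rcases eq_or_lt_of_le (abs_nonneg (p:ℝ)) with h|h
          · rw [← h]; simp
          · exact le_of_lt (mul_lt_mul_of_pos_left hz h)
        have hq : |(q:ℝ)| * |W k - w| ≤ |(q:ℝ)| * (ε/M) := by
          rcases eq_or_lt_of_le (abs_nonneg (q:ℝ)) with h|h
          · rw [← h]; simp
          · exact le_of_lt (mul_lt_mul_of_pos_left hw h)
        have : (|(p:ℝ)| + |(q:ℝ)|) * (ε/M) < M * (ε/M) := by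
          have : (0:ℝ) < ε/M := by positivity
          nlinarith
        nlinarith
    _ = ε := by field_simp

lemma not_crit {V : ℕ → ℝ} (h : ¬ Crit V) :
    ∃ ε > (0:ℝ), {k | ∀ z : ℤ, ε ≤ |V k - z|} ∈ U := by
  simp only [Crit, not_forall] at h
  obtain ⟨ε, hε, hS⟩ := h
  refine ⟨ε, hε, ?_⟩
  have := (Ultrafilter.compl_mem_iff_notMem (f := U)).2 hS
  convert this using 1
  ext k
  simp [not_lt]

variable {γ : Type} [Fintype γ]

def lin (c : γ → ℤ) (w : ℕ → γ → ℝ) : ℕ → ℝ := fun k => ∑ i, (c i : ℝ) * w k i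
def lc (c : γ → ℤ) (u : γ → ℝ) : ℝ := ∑ i, (c i : ℝ) * u i
def Good (w : ℕ → γ → ℝ) (u : γ → ℝ) : Prop := ∀ c : γ → ℤ, Crit (lin c w) → lc c u = 0

lemma lin_perturb (c : γ → ℤ) (w : ℕ → γ → ℝ) (u : γ → ℝ) (a : ℕ → ℝ) (k : ℕ) :
    lin c (fun k i => w k i + a k * u i) k = lin c w k + a k * lc c u := by
  simp only [lin, lc, mul_add, Finset.sum_add_distrib, Finset.mul_sum]
  congr 1
  refine Finset.sum_congr rfl fun i _ => by ring

lemma lin_sub (c c' : γ → ℤ) (w : ℕ → γ → ℝ) (p q : ℤ) (k : ℕ) :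
    lin (fun i => p * c i + q * c' i) w k = p * lin c w k + q * lin c' w k := by
  simp only [lin, Finset.mul_sum, ← Finset.sum_add_distrib]
  refine Finset.sum_congr rfl fun i _ => by push_cast; ring

lemma lc_sub (c c' : γ → ℤ) (u : γ → ℝ) (p q : ℤ) :
    lc (fun i => p * c i + q * c' i) u = p * lc c u + q * lc c' u := by
  simp only [lc, Finset.mul_sum, ← Finset.sum_add_distrib]
  refine Finset.sum_congr rfl fun i _ => by push_cast; ring

lemma good_perturb {w : ℕ → γ → ℝ} {u : γ → ℝ} {a : ℕ → ℝ} (hG : Good w u) (ha : Small a) :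
    Good (fun k i => w k i + a k * u i) u := by
  intro c hc
  refine hG c (crit_congr_small hc ?_)
  have : (fun k => lin c w k - lin c (fun k i => w k i + a k * u i) k)
      = fun k => a k * (-(lc c u)) := by
    funext k; rw [lin_perturb]; ring
  rw [this]
  exact small_mul_const ha _

lemma ext_lemma {w : ℕ → γ → ℝ} {u : γ → ℝ} (hG : Good w u) (y : ℕ → ℝ) :
    ∃ s : ℝ, ∀ (c : γ → ℤ) (b : ℤ),
      Crit (fun k => lin c w k + b * y k) → lc c u + b * s = 0 := by
  by_cases hex : ∃ c₀ : γ → ℤ, ∃ b₀ : ℤ, b₀ ≠ 0 ∧ Crit (fun k => lin c₀ w k + b₀ * y k)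
  · obtain ⟨c₀, b₀, hb₀, hcrit₀⟩ := hex
    refine ⟨-(lc c₀ u) / b₀, fun c b hc => ?_⟩
    rcases eq_or_ne b 0 with rfl | hb
    · have h0 : Crit (lin c w) := by simpa using hc
      simpa using hG c h0
    · have hcrit : Crit (lin (fun i => b₀ * c i + (-b) * c₀ i) w) := by
        have h2 := crit_combo hc hcrit₀ b₀ (-b)
        have heq : (fun k => (b₀:ℝ) * (lin c w k + b * y k) + ((-b : ℤ)) * (lin c₀ w k + b₀ * y k))
            = lin (fun i => b₀ * c i + (-b) * c₀ i) w := by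
          funext k; rw [lin_sub]; push_cast; ring
        rwa [heq] at h2
      have h3 := hG _ hcrit
      rw [lc_sub] at h3
      have hb₀' : (b₀:ℝ) ≠ 0 := Int.cast_ne_zero.mpr hb₀
      field_simp
      push_cast at h3 ⊢
      nlinarith [h3]
  · push_neg at hex
    refine ⟨0, fun c b hc => ?_⟩
    rcases eq_or_ne b 0 with rfl | hb
    · have h0 : Crit (lin c w) := by simpa using hc
      simpa using hG c h0
    · exact absurd hc (hex c b hb)

/-- Key dichotomy for atomic formulas. -/
lemma key {w : ℕ → γ → ℝ} {u : γ → ℝ} {a : ℕ → ℝ} (hG : Good w u) (ha : Small a)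
    (e : γ → ℤ) :
    (∀ k, lin e (fun k i => w k i + a k * u i) k = lin e w k) ∨
    ∃ ε > (0:ℝ), {k | (∀ z : ℤ, ε ≤ |lin e w k - z|) ∧
      |lin e (fun k i => w k i + a k * u i) k - lin e w k| < ε/2} ∈ U := by
  by_cases hc : Crit (lin e w)
  · left
    intro k
    rw [lin_perturb, hG e hc, mul_zero, add_zero]
  · right
    obtain ⟨ε, hε, hS⟩ := not_crit hc
    refine ⟨ε, hε, ?_⟩
    have h2 : {k | |a k * lc e u| < ε/2} ∈ U := by
      have := small_mul_const ha (lc e u) (ε/2) (by positivity)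
      simpa using this
    refine (U : Filter ℕ).mem_of_superset ((U : Filter ℕ).inter_mem hS h2) ?_
    rintro k ⟨hk1, hk2⟩
    refine ⟨hk1, ?_⟩
    rw [lin_perturb]
    simpa using hk2

abbrev L' := LsLang[[(∅ : Set ℝ)]]

lemma term_lin {γ : Type} [Fintype γ] [DecidableEq γ] (t : L'.Term γ) :
    ∃ c : γ → ℕ, ∀ ρ : γ → ℝ, t.realize ρ = ∑ i, (c i : ℝ) * ρ i := by
  induction t with
  | var i =>
      refine ⟨fun j => if j = i then 1 else 0, fun ρ => ?_⟩
      simp [Term.realize, apply_ite, ite_mul, Finset.sum_ite_eq']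
  | func f ts ih =>
      rename_i l
      match l, f with
      | 0, Sum.inr c => exact absurd c.2 (Set.notMem_empty _)
      | 1, Sum.inl f => exact f.elim
      | 1, Sum.inr f => exact f.elim
      | 2, Sum.inr f => exact f.elim
      | (n+3), Sum.inl f => exact f.elim
      | (n+3), Sum.inr f => exact f.elim
      | 0, Sum.inl f => exact f.elim
      | 2, Sum.inl f =>
          obtain ⟨c0, h0⟩ := ih 0
          obtain ⟨c1, h1⟩ := ih 1
          refine ⟨fun j => c0 j + c1 j, fun ρ => ?_⟩
          have : Term.realize ρ (Term.func (Sum.inl f : L'.Functions 2) ts)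
              = Term.realize ρ (ts 0) + Term.realize ρ (ts 1) := rfl
          rw [this, h0, h1, ← Finset.sum_add_distrib]
          congr 1; funext j; push_cast; ring

/-- realize as lin of integer coefficients -/
lemma term_lin' {γ : Type} [Fintype γ] [DecidableEq γ] (t : L'.Term γ) :
    ∃ e : γ → ℤ, ∀ (ρ : γ → ℝ), t.realize ρ = lc e ρ := by
  obtain ⟨c, hc⟩ := term_lin t
  refine ⟨fun i => (c i : ℤ), fun ρ => ?_⟩
  rw [hc]
  simp [lc]

lemma lc_sub' {γ : Type} [Fintype γ] (e₁ e₂ : γ → ℤ) (ρ : γ → ℝ) :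
    lc (fun i => e₁ i - e₂ i) ρ = lc e₁ ρ - lc e₂ ρ := by
  simp only [lc, ← Finset.sum_sub_distrib]
  refine Finset.sum_congr rfl fun i _ => by push_cast; ring

lemma lin_eq_lc {γ : Type} [Fintype γ] (e : γ → ℤ) (w : ℕ → γ → ℝ) (k : ℕ) :
    lin e w k = lc e (w k) := rfl

lemma sum_elim_add {n ℓ : ℕ} (v : Fin n → ℝ) (xs : Fin ℓ → ℝ) (uv : Fin n → ℝ)
    (uxs : Fin ℓ → ℝ) (e : ℝ) :
    Sum.elim (fun i => v i + e * uv i) (fun j => xs j + e * uxs j)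
      = fun i => Sum.elim v xs i + e * Sum.elim uv uxs i := by
  funext i; cases i <;> rfl

lemma snoc_add {ℓ : ℕ} (A : Fin ℓ → ℝ) (B : ℝ) (C : Fin ℓ → ℝ) (D e : ℝ) :
    (fun j => Fin.snoc (α := fun _ => ℝ) A B j + e * Fin.snoc (α := fun _ => ℝ) C D j)
      = (Fin.snoc (fun j => A j + e * C j) (B + e * D) : Fin (ℓ+1) → ℝ) := by
  funext j
  rcases Fin.eq_castSucc_or_eq_last j with ⟨i, rfl⟩ | rfl <;> simp

lemma lin_snoc {n ℓ : ℕ} (c : (Fin n ⊕ Fin (ℓ+1)) → ℤ) (V : ℕ → Fin n → ℝ)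
    (W : ℕ → Fin ℓ → ℝ) (T : ℕ → ℝ) (k : ℕ) :
    lin c (fun k => Sum.elim (V k) (Fin.snoc (W k) (T k))) k
      = lin (Sum.elim (fun i => c (Sum.inl i)) (fun j => c (Sum.inr j.castSucc)))
          (fun k => Sum.elim (V k) (W k)) k + c (Sum.inr (Fin.last ℓ)) * T k := by
  simp only [lin, Fintype.sum_sum_type, Sum.elim_inl, Sum.elim_inr, Fin.sum_univ_castSucc,
    Fin.snoc_castSucc, Fin.snoc_last]
  ring

lemma lc_snoc {n ℓ : ℕ} (c : (Fin n ⊕ Fin (ℓ+1)) → ℤ) (uv : Fin n → ℝ)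
    (uxs : Fin ℓ → ℝ) (s : ℝ) :
    lc c (Sum.elim uv (Fin.snoc uxs s))
      = lc (Sum.elim (fun i => c (Sum.inl i)) (fun j => c (Sum.inr j.castSucc)))
          (Sum.elim uv uxs) + c (Sum.inr (Fin.last ℓ)) * s := by
  simp only [lc, Fintype.sum_sum_type, Sum.elim_inl, Sum.elim_inr, Fin.sum_univ_castSucc,
    Fin.snoc_castSucc, Fin.snoc_last]
  ring

lemma main {n : ℕ} {ℓ : ℕ} (φ : L'.BoundedFormula (Fin n) ℓ) :
    ∀ (v : ℕ → Fin n → ℝ) (xs : ℕ → Fin ℓ → ℝ) (uv : Fin n → ℝ) (uxs : Fin ℓ → ℝ)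
    (a : ℕ → ℝ), Small a →
    Good (fun k => Sum.elim (v k) (xs k)) (Sum.elim uv uxs) →
    {k | φ.Realize (v k) (xs k) ↔
      φ.Realize (fun i => v k i + a k * uv i) (fun j => xs k j + a k * uxs j)} ∈ U := by
  induction φ with
  | falsum =>
      intro v xs uv uxs a ha hG
      refine (U : Filter ℕ).mem_of_superset Filter.univ_mem ?_
      intro k _
      simp [BoundedFormula.Realize]
  | equal t₁ t₂ =>
      intro v xs uv uxs a ha hG
      obtain ⟨e₁, he₁⟩ := term_lin' t₁
      obtain ⟨e₂, he₂⟩ := term_lin' t₂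
      set u : (Fin n ⊕ Fin _) → ℝ := Sum.elim uv uxs with hu
      set w : ℕ → (Fin n ⊕ Fin _) → ℝ := fun k => Sum.elim (v k) (xs k) with hw
      set e : (Fin n ⊕ Fin _) → ℤ := fun i => e₁ i - e₂ i with he
      have hreal : ∀ (V : Fin n → ℝ) (XS : Fin _ → ℝ),
          ((BoundedFormula.equal t₁ t₂).Realize V XS ↔ lc e (Sum.elim V XS) = 0) := by
        intro V XS
        have h0 : ((BoundedFormula.equal t₁ t₂).Realize V XS ↔
            t₁.realize (Sum.elim V XS) = t₂.realize (Sum.elim V XS)) := Iff.rfl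
        rw [h0, he₁, he₂, he]
        rw [lc_sub' e₁ e₂ (Sum.elim V XS), sub_eq_zero]
      have hpert : ∀ k, Sum.elim (fun i => v k i + a k * uv i) (fun j => xs k j + a k * uxs j)
          = fun i => w k i + a k * u i := by
        intro k; rw [hw, hu]; exact sum_elim_add (v k) (xs k) uv uxs (a k)
      rcases key hG ha e with hcase | ⟨ε, hε, hS⟩
      · refine (U : Filter ℕ).mem_of_superset Filter.univ_mem fun k _ => ?_
        simp only [Set.mem_setOf_eq]
        rw [hreal (v k) (xs k), hreal _ _, hpert k]
        rw [show lc e (fun i => w k i + a k * u i) = lc e (w k) from hcase k]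
      · refine (U : Filter ℕ).mem_of_superset hS fun k hk => ?_
        obtain ⟨hk1, hk2⟩ := hk
        simp only [Set.mem_setOf_eq]
        rw [hreal (v k) (xs k), hreal _ _, hpert k]
        rw [lin_eq_lc e (fun k i => w k i + a k * u i) k, lin_eq_lc e w k] at hk2
        have hz0 : ε ≤ |lc e (w k)| := by have := hk1 0; rw [lin_eq_lc e w k] at this; simpa using this
        have h1 : lc e (w k) ≠ 0 := by
          intro h; rw [h] at hz0; simp at hz0; linarith
        have h2 : lc e (fun i => w k i + a k * u i) ≠ 0 := by
          intro h
          rw [h, zero_sub, abs_neg] at hk2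
          linarith
        exact iff_of_false h1 h2
  | @rel ℓ' l R ts =>
      intro v xs uv uxs a ha hG
      match l, R with
      | 0, Sum.inl R => exact R.elim
      | 0, Sum.inr R => exact R.elim
      | 1, Sum.inr R => exact R.elim
      | 2, Sum.inr R => exact R.elim
      | (m+3), Sum.inl R => exact R.elim
      | (m+3), Sum.inr R => exact R.elim
      | 1, Sum.inl R =>
          -- the integrality predicate
          obtain ⟨e, he⟩ := term_lin' (ts 0)
          set u : (Fin n ⊕ Fin _) → ℝ := Sum.elim uv uxs with hu
          set w : ℕ → (Fin n ⊕ Fin _) → ℝ := fun k => Sum.elim (v k) (xs k) with hw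
          have hreal : ∀ (V : Fin n → ℝ) (XS : Fin _ → ℝ),
              ((BoundedFormula.rel (Sum.inl R : L'.Relations 1) ts).Realize V XS ↔
                ∃ z : ℤ, lc e (Sum.elim V XS) = (z : ℝ)) := by
            intro V XS
            have h0 : ((BoundedFormula.rel (Sum.inl R : L'.Relations 1) ts).Realize V XS ↔
                ∃ z : ℤ, (ts 0).realize (Sum.elim V XS) = (z : ℝ)) := Iff.rfl
            rw [h0]
            constructor
            · rintro ⟨z, hz⟩; exact ⟨z, by rw [← he]; exact hz⟩
            · rintro ⟨z, hz⟩; exact ⟨z, by rw [he]; exact hz⟩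
          have hpert : ∀ k, Sum.elim (fun i => v k i + a k * uv i)
              (fun j => xs k j + a k * uxs j) = fun i => w k i + a k * u i := by
            intro k; rw [hw, hu]; exact sum_elim_add (v k) (xs k) uv uxs (a k)
          rcases key hG ha e with hcase | ⟨ε, hε, hS⟩
          · refine (U : Filter ℕ).mem_of_superset Filter.univ_mem fun k _ => ?_
            simp only [Set.mem_setOf_eq]
            rw [hreal (v k) (xs k), hreal _ _, hpert k]
            rw [show lc e (fun i => w k i + a k * u i) = lc e (w k) from hcase k]
          · refine (U : Filter ℕ).mem_of_superset hS fun k hk => ?_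
            obtain ⟨hk1, hk2⟩ := hk
            simp only [Set.mem_setOf_eq]
            rw [hreal (v k) (xs k), hreal _ _, hpert k]
            rw [lin_eq_lc e (fun k i => w k i + a k * u i) k, lin_eq_lc e w k] at hk2
            have h1 : ¬ ∃ z : ℤ, lc e (w k) = (z:ℝ) := by
              rintro ⟨z, hz⟩
              have := hk1 z
              rw [lin_eq_lc e w k, hz] at this
              simp at this; linarith
            have h2 : ¬ ∃ z : ℤ, lc e (fun i => w k i + a k * u i) = (z:ℝ) := by
              rintro ⟨z, hz⟩
              have h3 := hk1 z
              rw [lin_eq_lc e w k] at h3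
              have h4 : |lc e (w k) - (z:ℝ)| ≤
                  |lc e (w k) - lc e (fun i => w k i + a k * u i)|
                  + |lc e (fun i => w k i + a k * u i) - (z:ℝ)| := abs_sub_le _ _ _
              have h5 : |lc e (w k) - lc e (fun i => w k i + a k * u i)| < ε/2 := by
                rw [abs_sub_comm]; exact hk2
              have h6 : |lc e (fun i => w k i + a k * u i) - (z:ℝ)| = 0 := by
                rw [hz, sub_self, abs_zero]
              linarith
            exact iff_of_false h1 h2
      | 2, Sum.inl R =>
          -- the order predicate
          obtain ⟨e₁, he₁⟩ := term_lin' (ts 0)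
          obtain ⟨e₂, he₂⟩ := term_lin' (ts 1)
          set u : (Fin n ⊕ Fin _) → ℝ := Sum.elim uv uxs with hu
          set w : ℕ → (Fin n ⊕ Fin _) → ℝ := fun k => Sum.elim (v k) (xs k) with hw
          set e : (Fin n ⊕ Fin _) → ℤ := fun i => e₂ i - e₁ i with he
          have hreal : ∀ (V : Fin n → ℝ) (XS : Fin _ → ℝ),
              ((BoundedFormula.rel (Sum.inl R : L'.Relations 2) ts).Realize V XS ↔
                0 < lc e (Sum.elim V XS)) := by
            intro V XS
            have h0 : ((BoundedFormula.rel (Sum.inl R : L'.Relations 2) ts).Realize V XS ↔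
                (ts 0).realize (Sum.elim V XS) < (ts 1).realize (Sum.elim V XS)) := Iff.rfl
            rw [h0, he₁, he₂, he, lc_sub' e₂ e₁ (Sum.elim V XS), sub_pos]
          have hpert : ∀ k, Sum.elim (fun i => v k i + a k * uv i)
              (fun j => xs k j + a k * uxs j) = fun i => w k i + a k * u i := by
            intro k; rw [hw, hu]; exact sum_elim_add (v k) (xs k) uv uxs (a k)
          rcases key hG ha e with hcase | ⟨ε, hε, hS⟩
          · refine (U : Filter ℕ).mem_of_superset Filter.univ_mem fun k _ => ?_
            simp only [Set.mem_setOf_eq]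
            rw [hreal (v k) (xs k), hreal _ _, hpert k]
            rw [show lc e (fun i => w k i + a k * u i) = lc e (w k) from hcase k]
          · refine (U : Filter ℕ).mem_of_superset hS fun k hk => ?_
            obtain ⟨hk1, hk2⟩ := hk
            simp only [Set.mem_setOf_eq]
            rw [hreal (v k) (xs k), hreal _ _, hpert k]
            rw [lin_eq_lc e (fun k i => w k i + a k * u i) k, lin_eq_lc e w k] at hk2
            have hz0 : ε ≤ |lc e (w k)| := by
              have := hk1 0
              rw [lin_eq_lc e w k] at this
              simpa using this
            rcases abs_cases (lc e (w k)) with ⟨hab, _⟩ | ⟨hab, _⟩ <;>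
              rcases abs_cases (lc e (fun i => w k i + a k * u i) - lc e (w k)) with
                ⟨hab2, _⟩ | ⟨hab2, _⟩ <;>
              constructor <;> intro hh <;> linarith
  | imp φ₁ φ₂ ih₁ ih₂ =>
      intro v xs uv uxs a ha hG
      have h1 := ih₁ v xs uv uxs a ha hG
      have h2 := ih₂ v xs uv uxs a ha hG
      refine (U : Filter ℕ).mem_of_superset ((U : Filter ℕ).inter_mem h1 h2) ?_
      rintro k ⟨hk1, hk2⟩
      simp only [Set.mem_setOf_eq, BoundedFormula.realize_imp] at *
      tauto
  | @all ℓ' ψ ih =>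
      intro v xs uv uxs a ha hG
      classical
      by_contra hT
      rw [← Ultrafilter.compl_mem_iff_notMem] at hT
      set v' : ℕ → Fin n → ℝ := fun k i => v k i + a k * uv i with hv'
      set xs' : ℕ → Fin ℓ' → ℝ := fun k j => xs k j + a k * uxs j with hxs'
      have hpert : ∀ k, Sum.elim (v' k) (xs' k)
          = fun i => Sum.elim (v k) (xs k) i + a k * Sum.elim uv uxs i := by
        intro k; exact sum_elim_add (v k) (xs k) uv uxs (a k)
      have hsplit : {k | (ψ.all).Realize (v k) (xs k) ∧ ¬ (ψ.all).Realize (v' k) (xs' k)} ∪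
          {k | ¬ (ψ.all).Realize (v k) (xs k) ∧ (ψ.all).Realize (v' k) (xs' k)} ∈ U := by
        refine (U : Filter ℕ).mem_of_superset hT ?_
        intro k hk
        simp only [Set.mem_compl_iff, Set.mem_setOf_eq] at hk
        simp only [Set.mem_union, Set.mem_setOf_eq]
        tauto
      rcases (Ultrafilter.union_mem_iff).1 hsplit with hA | hB
      · -- true at base, fails at perturbed point: find witnesses at perturbed point
        set t' : ℕ → ℝ := fun k =>
          if h : ∃ t, ¬ ψ.Realize (v' k) (Fin.snoc (xs' k) t) then h.choose else 0 with ht'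
        have ht'spec : ∀ k, k ∈ {k | (ψ.all).Realize (v k) (xs k) ∧
            ¬ (ψ.all).Realize (v' k) (xs' k)} → ¬ ψ.Realize (v' k) (Fin.snoc (xs' k) (t' k)) := by
          intro k hk
          obtain ⟨_, hQ⟩ := hk
          rw [BoundedFormula.realize_all] at hQ
          push_neg at hQ
          rw [ht']
          dsimp only
          rw [dif_pos hQ]
          exact hQ.choose_spec
        have hG' : Good (fun k i => Sum.elim (v k) (xs k) i + a k * Sum.elim uv uxs i)
            (Sum.elim uv uxs) := good_perturb hG ha
        obtain ⟨s, hs⟩ := ext_lemma hG' t'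
        have hG'' : Good (fun k => Sum.elim (v' k) (Fin.snoc (xs' k) (t' k)))
            (Sum.elim uv (Fin.snoc uxs s)) := by
          intro c hc
          rw [lc_snoc]
          refine hs _ _ ?_
          have heq : lin c (fun k => Sum.elim (v' k) (Fin.snoc (xs' k) (t' k)))
              = fun k => lin (Sum.elim (fun i => c (Sum.inl i)) (fun j => c (Sum.inr j.castSucc)))
                  (fun k i => Sum.elim (v k) (xs k) i + a k * Sum.elim uv uxs i) k
                  + (c (Sum.inr (Fin.last ℓ'))) * t' k := by
            have h9 : (fun k => Sum.elim (v' k) (xs' k))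
                = (fun k i => Sum.elim (v k) (xs k) i + a k * Sum.elim uv uxs i) :=
              funext hpert
            funext k
            rw [lin_snoc c v' xs' t' k, h9]
          rwa [heq] at hc
        have hIH := ih v' (fun k => Fin.snoc (xs' k) (t' k)) uv (Fin.snoc uxs s)
            (fun k => -(a k)) (small_neg ha) hG''
        obtain ⟨k, hkA, hkIH⟩ := Filter.nonempty_of_mem ((U : Filter ℕ).inter_mem hA hIH)
        have hP := hkA.1
        rw [BoundedFormula.realize_all] at hP
        have hP' := hP (t' k - a k * s)
        simp only [Set.mem_setOf_eq] at hkIH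
        have hb1 : (fun i => v' k i + -(a k) * uv i) = v k := by
          funext i; rw [hv']; ring
        have hb2 : (fun j => Fin.snoc (α := fun _ => ℝ) (xs' k) (t' k) j
              + -(a k) * Fin.snoc (α := fun _ => ℝ) uxs s j)
            = Fin.snoc (xs k) (t' k - a k * s) := by
          funext j
          rcases Fin.eq_castSucc_or_eq_last j with ⟨i, rfl⟩ | rfl
          · simp only [Fin.snoc_castSucc, hxs']; ring
          · simp only [Fin.snoc_last]; ring
        rw [hb1, hb2] at hkIH
        exact (ht'spec k hkA) (hkIH.2 hP')
      · -- false at base, true at perturbed point: find witnesses at base point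
        set t' : ℕ → ℝ := fun k =>
          if h : ∃ t, ¬ ψ.Realize (v k) (Fin.snoc (xs k) t) then h.choose else 0 with ht'
        have ht'spec : ∀ k, k ∈ {k | ¬ (ψ.all).Realize (v k) (xs k) ∧
            (ψ.all).Realize (v' k) (xs' k)} → ¬ ψ.Realize (v k) (Fin.snoc (xs k) (t' k)) := by
          intro k hk
          obtain ⟨hQ, _⟩ := hk
          rw [BoundedFormula.realize_all] at hQ
          push_neg at hQ
          rw [ht']
          dsimp only
          rw [dif_pos hQ]
          exact hQ.choose_spec
        obtain ⟨s, hs⟩ := ext_lemma hG t'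
        have hG'' : Good (fun k => Sum.elim (v k) (Fin.snoc (xs k) (t' k)))
            (Sum.elim uv (Fin.snoc uxs s)) := by
          intro c hc
          rw [lc_snoc]
          refine hs _ _ ?_
          have heq : lin c (fun k => Sum.elim (v k) (Fin.snoc (xs k) (t' k)))
              = fun k => lin (Sum.elim (fun i => c (Sum.inl i)) (fun j => c (Sum.inr j.castSucc)))
                  (fun k => Sum.elim (v k) (xs k)) k
                  + (c (Sum.inr (Fin.last ℓ'))) * t' k := by
            funext k
            rw [lin_snoc c v xs t' k]
          rwa [heq] at hc
        have hIH := ih v (fun k => Fin.snoc (xs k) (t' k)) uv (Fin.snoc uxs s) a ha hG''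
        obtain ⟨k, hkB, hkIH⟩ := Filter.nonempty_of_mem ((U : Filter ℕ).inter_mem hB hIH)
        have hQ := hkB.2
        rw [BoundedFormula.realize_all] at hQ
        have hQ' := hQ (t' k + a k * s)
        simp only [Set.mem_setOf_eq] at hkIH
        have hb2 : (fun j => Fin.snoc (α := fun _ => ℝ) (xs k) (t' k) j
              + a k * Fin.snoc (α := fun _ => ℝ) uxs s j)
            = Fin.snoc (xs' k) (t' k + a k * s) := by
          funext j
          rcases Fin.eq_castSucc_or_eq_last j with ⟨i, rfl⟩ | rfl
          · simp only [Fin.snoc_castSucc, hxs']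
          · simp only [Fin.snoc_last]
        rw [hb2] at hkIH
        exact (ht'spec k hkB) (hkIH.2 hQ')

lemma crit_limit {V : ℕ → ℝ} {L : ℝ} (hV : Crit V) (hL : Tendsto V atTop (nhds L)) :
    ∃ z : ℤ, L = (z : ℝ) := by
  by_contra h
  push_neg at h
  have hf : Int.fract L ≠ 0 := by
    intro h0
    refine h ⌊L⌋ ?_
    have := Int.fract_add_floor L
    rw [h0, zero_add] at this
    exact this.symm
  have hf0 : 0 < Int.fract L := lt_of_le_of_ne (Int.fract_nonneg L) (Ne.symm hf)
  have hf1 : Int.fract L < 1 := Int.fract_lt_one L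
  set ε : ℝ := min (Int.fract L) (1 - Int.fract L) with hε
  have hεpos : 0 < ε := lt_min hf0 (by linarith)
  have hdist : ∀ z : ℤ, ε ≤ |L - z| := by
    intro z
    have hfr : Int.fract L = L - ⌊L⌋ := Int.self_sub_floor L ▸ rfl
    rcases le_or_gt (z : ℤ) ⌊L⌋ with hz | hz
    · have hzr : (z : ℝ) ≤ (⌊L⌋ : ℝ) := by exact_mod_cast hz
      have h1 : Int.fract L ≤ L - z := by rw [hfr]; linarith
      have : ε ≤ L - z := le_trans (min_le_left _ _) h1
      exact this.trans (le_abs_self _)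
    · have hzr : (⌊L⌋ : ℝ) + 1 ≤ (z : ℝ) := by exact_mod_cast hz
      have h1 : 1 - Int.fract L ≤ z - L := by rw [hfr]; linarith
      have : ε ≤ z - L := le_trans (min_le_right _ _) h1
      calc ε ≤ z - L := this
        _ ≤ |z - L| := le_abs_self _
        _ = |L - z| := abs_sub_comm _ _
  have h1 := hV (ε/2) (by positivity)
  have h2 : {k | |V k - L| < ε/2} ∈ U := by
    refine mem_U_of_eventually ?_
    have := (Metric.tendsto_atTop.1 hL) (ε/2) (by positivity)
    obtain ⟨N, hN⟩ := this
    filter_upwards [eventually_ge_atTop N] with k hk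
    simpa [Real.dist_eq] using hN k hk
  obtain ⟨k, hk1, hk2⟩ := Filter.nonempty_of_mem ((U : Filter ℕ).inter_mem h1 h2)
  obtain ⟨z, hz⟩ := hk1
  simp only [Set.mem_setOf_eq] at hk2
  have : |L - z| < ε := by
    calc |L - z| ≤ |L - V k| + |V k - z| := abs_sub_le _ _ _
      _ < ε/2 + ε/2 := by rw [abs_sub_comm]; exact add_lt_add hk2 hz
      _ = ε := by ring
  exact absurd this (not_lt.2 (hdist z))

lemma exists_dir {n : ℕ} {x : Fin n → ℝ} (hx : ¬ ∀ i, ∃ q : ℚ, x i = (q : ℝ)) :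
    ∃ u : Fin n → ℝ, u ≠ 0 ∧ ∀ c : Fin n → ℤ,
      (∃ z : ℤ, ∑ i, (c i : ℝ) * x i = (z : ℝ)) → ∑ i, (c i : ℝ) * u i = 0 := by
  classical
  set S : Submodule ℚ (Fin n → ℚ) :=
    { carrier := {c | ∃ q : ℚ, ∑ i, (c i : ℝ) * x i = (q : ℝ)}
      add_mem' := by
        rintro c c' ⟨q, hq⟩ ⟨q', hq'⟩
        refine ⟨q + q', ?_⟩
        push_cast
        rw [← hq, ← hq', ← Finset.sum_add_distrib]
        refine Finset.sum_congr rfl fun i _ => ?_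
        simp only [Pi.add_apply]
        push_cast
        ring
      zero_mem' := ⟨0, by simp⟩
      smul_mem' := by
        rintro t c ⟨q, hq⟩
        refine ⟨t * q, ?_⟩
        push_cast
        rw [← hq, Finset.mul_sum]
        refine Finset.sum_congr rfl fun i _ => ?_
        simp only [Pi.smul_apply, smul_eq_mul]
        push_cast
        ring } with hSdef
  have hS : S ≠ ⊤ := by
    intro h
    apply hx
    intro i
    have hmem : (Pi.single i 1 : Fin n → ℚ) ∈ S := by rw [h]; trivial
    obtain ⟨q, hq⟩ := hmem
    refine ⟨q, ?_⟩
    rw [← hq]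
    rw [Finset.sum_eq_single i]
    · simp
    · intro j _ hj; simp [Pi.single_apply, hj]
    · intro hi; exact absurd (Finset.mem_univ i) hi
  obtain ⟨f, hf0, hfmap⟩ :=
    S.exists_dual_map_eq_bot_of_lt_top (lt_top_iff_ne_top.2 hS) inferInstance
  set vq : Fin n → ℚ := fun i => f (fun j => if i = j then 1 else 0) with hvq
  have hfc : ∀ c : Fin n → ℚ, f c = ∑ i, c i * vq i := by
    intro c
    conv_lhs => rw [pi_eq_sum_univ c]
    rw [map_sum]
    refine Finset.sum_congr rfl fun i _ => ?_
    rw [map_smul]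
    simp [hvq, smul_eq_mul]
  have hvne : vq ≠ 0 := by
    intro h0
    apply hf0
    refine LinearMap.ext fun c => ?_
    rw [hfc c, h0]
    simp
  refine ⟨fun i => (vq i : ℝ), ?_, ?_⟩
  · intro h0
    apply hvne
    funext i
    have := congrFun h0 i
    simpa using this
  · rintro c ⟨z, hz⟩
    have hc : (fun i => (c i : ℚ)) ∈ S := by
      refine ⟨(z : ℚ), ?_⟩
      push_cast
      exact hz
    have hfc0 : f (fun i => (c i : ℚ)) = 0 := by
      have hm : f (fun i => (c i : ℚ)) ∈ S.map f := Submodule.mem_map_of_mem hc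
      rw [hfmap] at hm
      exact (Submodule.mem_bot ℚ).1 hm
    rw [hfc] at hfc0
    have := congrArg (fun q : ℚ => (q : ℝ)) hfc0
    push_cast at this
    simpa using this


lemma stratum_of_good {n : ℕ} {X : Set (Fin n → ℝ)} (hX : LsDefinable X)
    (x u : Fin n → ℝ) (hu : u ≠ 0)
    (hg : ∀ c : Fin n → ℤ, (∃ z : ℤ, ∑ i, (c i : ℝ) * x i = (z : ℝ)) →
      ∑ i, (c i : ℝ) * u i = 0) :
    IsStratum X x u := by
  obtain ⟨φ, hφ⟩ := hX
  by_contra hstr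
  rw [IsStratum] at hstr
  push_neg at hstr
  have hseq : ∀ k : ℕ, ∃ (zz : Fin n → ℝ) (α : ℝ), zz ∈ X ∧
      zz ∈ Metric.ball x (1/(k+1)) ∧ (zz + α • u) ∈ Metric.ball x (1/(k+1)) ∧
      (zz + α • u) ∉ X := by
    intro k
    obtain ⟨y, hyb, ⟨⟨zz, ⟨hzX, hzb⟩, α, hyz⟩, hyX⟩⟩ := hstr (1/(k+1)) (by positivity)
    exact ⟨zz, α, hzX, hzb, hyz ▸ hyb, hyz ▸ hyX⟩
  choose z α hzX hzb hyb hyX using hseq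
  have hun : (0:ℝ) < ‖u‖ := norm_pos_iff.2 hu
  have hbound : ∀ k : ℕ, |α k| ≤ (2/‖u‖) * (1/(k+1)) := by
    intro k
    have h1 : ‖α k • u‖ = dist (z k + α k • u) (z k) := by
      rw [dist_eq_norm]
      congr 1
      abel
    have h2 : dist (z k + α k • u) (z k) ≤ dist (z k + α k • u) x + dist x (z k) :=
      dist_triangle _ _ _
    have h3 : dist (z k + α k • u) x < 1/(k+1) := Metric.mem_ball.1 (hyb k)
    have h4 : dist x (z k) < 1/(k+1) := by
      rw [dist_comm]; exact Metric.mem_ball.1 (hzb k)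
    have h5 : ‖α k • u‖ ≤ 2 * (1/(k+1)) := by
      rw [h1]; linarith
    rw [norm_smul, Real.norm_eq_abs] at h5
    rw [div_mul_eq_mul_div, le_div_iff₀ hun]
    calc |α k| * ‖u‖ ≤ 2 * (1/(k+1)) := h5
      _ = 2 * (1/(k+1)) := rfl
    -- done
  have hαt : Tendsto α atTop (nhds 0) := by
    refine squeeze_zero_norm hbound ?_
    have := (tendsto_one_div_add_atTop_nhds_zero_nat : Tendsto (fun n : ℕ => 1 / ((n : ℝ) + 1)) atTop (nhds 0))
    have h2 := this.const_mul (2/‖u‖)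
    simpa using h2
  have hα : Small α := small_of_tendsto hαt
  have hzt : ∀ i : Fin n, Tendsto (fun k => z k i) atTop (nhds (x i)) := by
    intro i
    have hb : ∀ k : ℕ, ‖z k i - x i‖ ≤ 1/(k+1) := by
      intro k
      have h1 : |z k i - x i| ≤ ‖z k - x‖ := by
        have := norm_le_pi_norm (z k - x) i
        simpa using this
      have h2 : ‖z k - x‖ = dist (z k) x := (dist_eq_norm _ _).symm
      have h3 : dist (z k) x < 1/(k+1) := Metric.mem_ball.1 (hzb k)
      rw [Real.norm_eq_abs]
      linarith [h1, h2 ▸ h3]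
    have h0 : Tendsto (fun k => z k i - x i) atTop (nhds 0) := by
      refine squeeze_zero_norm hb ?_
      exact tendsto_one_div_add_atTop_nhds_zero_nat
    have := h0.add_const (x i)
    simpa using this
  set xs0 : ℕ → Fin 0 → ℝ := fun _ => (fun j => j.elim0) with hxs0
  set ux0 : Fin 0 → ℝ := fun j => j.elim0 with hux0
  have hGood : Good (fun k => Sum.elim (z k) (xs0 k)) (Sum.elim u ux0) := by
    intro c hc
    set c' : Fin n → ℤ := fun i => c (Sum.inl i) with hc'
    have h1 : lin c (fun k => Sum.elim (z k) (xs0 k))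
        = fun k => ∑ i, (c' i : ℝ) * z k i := by
      funext k
      simp [lin, Fintype.sum_sum_type, hc']
    have h2 : lc c (Sum.elim u ux0) = ∑ i, (c' i : ℝ) * u i := by
      simp [lc, Fintype.sum_sum_type, hc']
    rw [h1] at hc
    rw [h2]
    have hlim : Tendsto (fun k => ∑ i, (c' i : ℝ) * z k i) atTop
        (nhds (∑ i, (c' i : ℝ) * x i)) := by
      refine tendsto_finset_sum _ fun i _ => ?_
      exact (hzt i).const_mul _
    exact hg c' (crit_limit hc hlim)
  have hMain := main φ z xs0 u ux0 α hα hGood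
  obtain ⟨k, hk⟩ := Filter.nonempty_of_mem hMain
  simp only [Set.mem_setOf_eq] at hk
  have hzX' : BoundedFormula.Realize φ (z k) (xs0 k) := by
    have : z k ∈ X := hzX k
    rw [hφ] at this
    have h0 : Formula.Realize φ (z k) := this
    rw [Formula.Realize] at h0
    convert h0 using 2
  have hyX' : ¬ BoundedFormula.Realize φ (fun i => z k i + α k * u i)
      (fun j => xs0 k j + α k * ux0 j) := by
    intro hcon
    apply hyX k
    rw [hφ]
    have h0 : Formula.Realize φ (fun i => z k i + α k * u i) := by
      rw [Formula.Realize]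
      convert hcon using 2
    have heq : (fun i => z k i + α k * u i) = z k + α k • u := by
      funext i; simp
    rw [heq] at h0
    exact h0
  exact hyX' (hk.1 hzX')

end Stmt10Aux

/-- A `⟨ℝ,+,<,ℤ⟩`-definable set has countably many singular points, all with rational
coordinates. -/
theorem stmt10 (n : ℕ) (X : Set (Fin n → ℝ)) (hX : LsDefinable X) :
    {x | IsSingular X x}.Countable ∧
    ∀ x : Fin n → ℝ, IsSingular X x → ∀ i, ∃ q : ℚ, x i = (q : ℝ) := by
  have hrat : ∀ x : Fin n → ℝ, IsSingular X x → ∀ i, ∃ q : ℚ, x i = (q : ℝ) := by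
    intro x hx
    by_contra hq
    obtain ⟨u, hu, hg⟩ := Stmt10Aux.exists_dir hq
    exact hu (hx u (Stmt10Aux.stratum_of_good hX x u hu hg))
  refine ⟨?_, hrat⟩
  have hsub : {x | IsSingular X x} ⊆
      {f : Fin n → ℝ | ∀ i, f i ∈ Set.range ((↑) : ℚ → ℝ)} := by
    intro x hx i
    obtain ⟨q, hq⟩ := hrat x hx i
    exact ⟨q, hq.symm⟩
  exact (Set.countable_pi (fun i => Set.countable_range _)).mono hsub
end
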